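/- arXiv:math/0405346 — 5 statements merged into one kernel-verified Lean document; each statement's English description precedes it below -/
import Mathlib

section
/- For every signed permutation sigma in the hyperoctahedral group B_n, there exist unique elements sigma_j in R_j^B for 0 <= j <= n-1 such that sigma = sigma_0 sigma_1 ... sigma_{n-1}; moreover, the resulting expression in the Coxeter generators is reduced. -/
open Equiv Finset

namespace SignedEven

/-- Type-B Coxeter generators inside `Equiv.Perm ℤ`:
`s 0` is the sign change in the first position, `s i = (i, i+1)(-i, -(i+1))`. -/
def s (i : ℕ) : Equiv.Perm ℤ :=
  if i = 0 then Equiv.swap 1 (-1)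
  else Equiv.swap (i : ℤ) ((i : ℤ) + 1) * Equiv.swap (-(i : ℤ)) (-((i : ℤ) + 1))

/-- Generators of the group of signed even permutations: `a 0 = s 0`, `a i = s 1 * s (i+1)`. -/
def a (i : ℕ) : Equiv.Perm ℤ := if i = 0 then s 0 else s 1 * s (i + 1)

/-- `σ` is a signed permutation on `{±1, …, ±n}` (an element of `B_n`). -/
def isB (n : ℕ) (σ : Equiv.Perm ℤ) : Prop :=
  (∀ i : ℤ, σ (-i) = -σ i) ∧ ∀ i : ℤ, (n : ℤ) < |i| → σ i = i

/-- `σ` is an (unsigned) permutation of `{1, …, n}` (an element of `S_n ⊆ B_n`). -/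
def isS (n : ℕ) (σ : Equiv.Perm ℤ) : Prop := isB n σ ∧ ∀ i : ℤ, 0 < i → 0 < σ i

/-- inversion number of the window `[σ(1), …, σ(n)]`. -/
noncomputable def invStat (n : ℕ) (σ : Equiv.Perm ℤ) : ℕ :=
  (((Finset.Icc (1 : ℤ) (n : ℤ)) ×ˢ (Finset.Icc (1 : ℤ) (n : ℤ))).filter
    (fun p => p.1 < p.2 ∧ σ p.2 < σ p.1)).card

/-- inversion number of the window of `|σ|`; its parity is the sign of `Abs σ`. -/
noncomputable def invAbs (n : ℕ) (σ : Equiv.Perm ℤ) : ℕ :=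
  (((Finset.Icc (1 : ℤ) (n : ℤ)) ×ˢ (Finset.Icc (1 : ℤ) (n : ℤ))).filter
    (fun p => p.1 < p.2 ∧ |σ p.2| < |σ p.1|)).card

/-- `σ ∈ L_n = C₂ ≀ A_n`: a signed permutation whose underlying permutation is even. -/
def isL (n : ℕ) (σ : Equiv.Perm ℤ) : Prop := isB n σ ∧ Even (invAbs n σ)

/-- `σ ∈ A_n`: an unsigned even permutation. -/
def isA (n : ℕ) (σ : Equiv.Perm ℤ) : Prop := isS n σ ∧ Even (invStat n σ)

/-- `Neg(σ) = {i ∈ [n] : σ(i) < 0}`. -/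
noncomputable def negSet (n : ℕ) (σ : Equiv.Perm ℤ) : Finset ℤ :=
  (Finset.Icc (1 : ℤ) (n : ℤ)).filter (fun i => σ i < 0)

/-- `σ ∈ D_n`: a signed permutation with an even number of negative window entries. -/
def isD (n : ℕ) (σ : Equiv.Perm ℤ) : Prop := isB n σ ∧ Even (negSet n σ).card

/-- the sum of the elements of `Neg(σ)`. -/
noncomputable def negSum (n : ℕ) (σ : Equiv.Perm ℤ) : ℤ := ∑ i ∈ negSet n σ, i

/-- `del_B(σ)`: the number of non-initial left-to-right minima of the window. -/
noncomputable def delB (n : ℕ) (σ : Equiv.Perm ℤ) : ℕ :=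
  ((Finset.Icc (2 : ℤ) (n : ℤ)).filter
    (fun j => ∀ i ∈ Finset.Icc (1 : ℤ) (n : ℤ), i < j → σ j < σ i)).card

/-- the Coxeter length of `σ ∈ B_n` with respect to `s 0, …, s (n-1)`. -/
noncomputable def ellB (n : ℕ) (σ : Equiv.Perm ℤ) : ℕ :=
  sInf {k | ∃ l : List ℕ, l.length = k ∧ (∀ i ∈ l, i < n) ∧ (l.map s).prod = σ}

/-- the `L`-length `ℓ_L(σ) = inv(σ) - del_B(σ) + Σ Neg(σ⁻¹)`. -/
noncomputable def ellL (n : ℕ) (σ : Equiv.Perm ℤ) : ℤ :=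
  (invStat n σ : ℤ) - (delB n σ : ℤ) + negSum n σ⁻¹

/-- the `A`-descent set of `π ∈ L_{n+1}`. -/
noncomputable def desASet (n : ℕ) (π : Equiv.Perm ℤ) : Finset ℕ :=
  (Finset.Icc 1 (n - 1)).filter (fun i => ellL (n + 1) (π * a i) ≤ ellL (n + 1) π)

/-- the `A`-descent number of `π ∈ L_{n+1}`. -/
noncomputable def desA (n : ℕ) (π : Equiv.Perm ℤ) : ℕ := (desASet n π).card

/-- the `S`-descent set of `σ ∈ B_n`. -/
def desSSet (n : ℕ) (σ : Equiv.Perm ℤ) : Finset ℕ :=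
  (Finset.Icc 1 (n - 1)).filter (fun i => σ ((i : ℤ) + 1) < σ (i : ℤ))

/-- `maj_B(σ)`. -/
def majB (n : ℕ) (σ : Equiv.Perm ℤ) : ℕ := ∑ i ∈ desSSet n σ, i

/-- `rmaj_{B_n}(σ)`. -/
def rmajB (n : ℕ) (σ : Equiv.Perm ℤ) : ℕ := ∑ i ∈ desSSet n σ, (n - i)

/-- `rmaj_{L_{n+1}}(π)`. -/
noncomputable def rmajL (n : ℕ) (π : Equiv.Perm ℤ) : ℕ := ∑ i ∈ desASet n π, (n - i)

/-- `nrmaj_{L_{n+1}}(π) = rmaj_{L_{n+1}}(π) + Σ Neg(π⁻¹)`. -/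
noncomputable def nrmajL (n : ℕ) (π : Equiv.Perm ℤ) : ℤ := (rmajL n π : ℤ) + negSum (n + 1) π⁻¹

/-- `s_j s_{j-1} ⋯ s_{j-k+1}` (k factors). -/
def rS (j k : ℕ) : Equiv.Perm ℤ := ((List.range k).map (fun t => s (j - t))).prod

/-- `R_j^S = {1, s_j, s_j s_{j-1}, …, s_j ⋯ s_1}`. -/
def RS (j : ℕ) : Set (Equiv.Perm ℤ) := {σ | ∃ k ≤ j, σ = rS j k}

/-- the word `s_j s_{j-1} ⋯` of length `k` running down to `s_0` and possibly back up. -/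
def wordB (j k : ℕ) : List ℕ :=
  ((List.range (min k (j + 1))).map (fun t => j - t)) ++
    ((List.range (k - (j + 1))).map (fun t => t + 1))

/-- the `k`-th element of `R_j^B`. -/
def rB (j k : ℕ) : Equiv.Perm ℤ := ((wordB j k).map s).prod

/-- `R_j^B = {1, s_j, …, s_j ⋯ s_1, s_j ⋯ s_1 s_0, s_j ⋯ s_1 s_0 s_1, …, s_j ⋯ s_1 s_0 s_1 ⋯ s_j}`. -/
def RB (j : ℕ) : Set (Equiv.Perm ℤ) := {σ | ∃ k ≤ 2 * j + 1, σ = rB j k}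

/-- the `k`-th element of `R_j^A`: `a_j ⋯ a_{j-k+1}` for `k ≤ j`, and `a_j ⋯ a_2 a_1⁻¹` for `k = j+1`. -/
def rA (j k : ℕ) : Equiv.Perm ℤ :=
  if k ≤ j then ((List.range k).map (fun t => a (j - t))).prod
  else ((List.range (j - 1)).map (fun t => a (j - t))).prod * (a 1)⁻¹

/-- `R_j^A = {1, a_j, a_j a_{j-1}, …, a_j ⋯ a_2 a_1, a_j ⋯ a_2 a_1⁻¹}`. -/
def RA (j : ℕ) : Set (Equiv.Perm ℤ) := {σ | ∃ k ≤ j + 1, σ = rA j k}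

/-- `R_j^L`. -/
def RL (j : ℕ) : Set (Equiv.Perm ℤ) :=
  if j = 0 then {1, a 0, a 1 * a 0 * (a 1)⁻¹, a 0 * a 1 * a 0 * (a 1)⁻¹}
  else RA j ∪ {σ | σ = rA j (j + 1) * a 0 ∨ σ = rA j (j + 1) * a 0 * (a 1)⁻¹ ∨
    ∃ m, 1 ≤ m ∧ m ≤ j ∧
      σ = rA j (j + 1) * a 0 * ((List.range m).map (fun t => a (t + 1))).prod}

section Lemmas

lemma s_apply (i : ℕ) (x : ℤ) : s i x =
    if i = 0 then (if x = 1 then -1 else if x = -1 then 1 else x)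
    else (if x = (i:ℤ) then (i:ℤ)+1 else if x = (i:ℤ)+1 then (i:ℤ)
      else if x = -(i:ℤ) then -((i:ℤ)+1) else if x = -((i:ℤ)+1) then -(i:ℤ) else x) := by
  rcases Nat.eq_zero_or_pos i with h | h
  · subst h; simp [s, Equiv.swap_apply_def]
  · have h0 : i ≠ 0 := h.ne'
    have h1 : (1:ℤ) ≤ (i:ℤ) := by exact_mod_cast h
    simp only [s, if_neg h0, Equiv.Perm.mul_apply, Equiv.swap_apply_def]
    split_ifs <;> omega

lemma s_s (i : ℕ) (x : ℤ) : s i (s i x) = x := by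
  have h1 : (0:ℤ) ≤ (i:ℤ) := by positivity
  simp only [s_apply]
  split_ifs <;> first | omega | exact False.elim ‹False›

lemma isB.mul {n : ℕ} {σ τ : Equiv.Perm ℤ} (hσ : isB n σ) (hτ : isB n τ) : isB n (σ * τ) := by
  refine ⟨fun i => ?_, fun i hi => ?_⟩
  · simp [Equiv.Perm.mul_apply, hτ.1, hσ.1]
  · simp [Equiv.Perm.mul_apply, hτ.2 i hi, hσ.2 i hi]

lemma isB.one (n : ℕ) : isB n 1 := ⟨fun i => by simp, fun i _ => rfl⟩

lemma isB.inv {n : ℕ} {σ : Equiv.Perm ℤ} (hσ : isB n σ) : isB n σ⁻¹ := by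
  refine ⟨fun i => ?_, fun i hi => ?_⟩
  · have := hσ.1 (σ⁻¹ i)
    simp only [Equiv.Perm.inv_def, Equiv.apply_symm_apply] at this
    have : σ⁻¹ (-i) = - σ⁻¹ i := by
      apply σ.injective
      simp only [Equiv.Perm.inv_def, Equiv.apply_symm_apply]
      rw [hσ.1 (σ.symm i)]
      simp
    exact this
  · apply σ.injective; simp only [Equiv.Perm.inv_def, Equiv.apply_symm_apply]; exact (hσ.2 i hi).symm

lemma isB.mono {n m : ℕ} (hnm : n ≤ m) {σ : Equiv.Perm ℤ} (hσ : isB n σ) : isB m σ :=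
  ⟨hσ.1, fun i hi => hσ.2 i (lt_of_le_of_lt (by exact_mod_cast hnm) hi)⟩

lemma isB_s {n i : ℕ} (h : i < n) : isB n (s i) := by
  constructor
  · intro x
    have h1 : (0:ℤ) ≤ (i:ℤ) := by positivity
    simp only [s_apply]; split_ifs <;> omega
  · intro x hx
    have h2 : (i:ℤ) + 1 ≤ (n:ℤ) := by exact_mod_cast h
    rw [lt_abs] at hx
    simp only [s_apply]; split_ifs <;> omega

lemma isB.bound {n : ℕ} {σ : Equiv.Perm ℤ} (hσ : isB n σ) {x : ℤ} (hx : |x| ≤ n) :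
    |σ x| ≤ n := by
  by_contra hc
  push_neg at hc
  have h2 := hσ.2 (σ x) hc
  have h3 := σ.injective h2
  rw [lt_abs] at hc
  rw [abs_le] at hx
  omega

lemma isB.zero {n : ℕ} {σ : Equiv.Perm ℤ} (hσ : isB n σ) : σ 0 = 0 := by
  have := hσ.1 0
  simp only [neg_zero] at this
  omega

lemma isB.apply_ne_zero {n : ℕ} {σ : Equiv.Perm ℤ} (hσ : isB n σ) {x : ℤ} (hx : x ≠ 0) :
    σ x ≠ 0 := by
  intro h
  exact hx (σ.injective (h.trans hσ.zero.symm))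

lemma prodList_isB {n : ℕ} (l : List ℕ) (hl : ∀ i ∈ l, i < n) : isB n (l.map s).prod := by
  induction l with
  | nil => exact isB.one n
  | cons i l ih =>
      simp only [List.map_cons, List.prod_cons]
      exact (isB_s (hl i (by simp))).mul (ih fun j hj => hl j (by simp [hj]))

end Lemmas
/-- the canonical "position of `j+1`" parameter of `rB j k`. -/
def phiB (j k : ℕ) : ℤ := if k ≤ j then (j:ℤ)+1-k else (j:ℤ)-k

/-- abstract form of the permutation `rB j k` : `J = j+1`, `c = phiB j k`. -/
def gfun (J c x : ℤ) : ℤ :=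
  if x = c then J else if x = -c then -J
  else if c < x ∧ -c < x ∧ x ≤ J then x-1
  else if -J ≤ x ∧ x < -c ∧ x < c then x+1 else x

lemma wordB_zero (j : ℕ) : wordB j 0 = [] := by simp [wordB]

lemma wordB_succ (j k : ℕ) :
    wordB j (k+1) = wordB j k ++ [if k ≤ j then j - k else k - j] := by
  rcases le_or_gt k j with h | h
  · have h1 : min (k+1) (j+1) = k + 1 := by omega
    have h2 : min k (j+1) = k := by omega
    have h3 : k + 1 - (j+1) = 0 := by omega
    have h4 : k - (j+1) = 0 := by omega
    simp [wordB, h1, h2, h3, h4, List.range_succ, if_pos h]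
  · have h1 : min (k+1) (j+1) = j + 1 := by omega
    have h2 : min k (j+1) = j + 1 := by omega
    have h3 : k + 1 - (j+1) = (k - (j+1)) + 1 := by omega
    have h4 : k - (j+1) + 1 = k - j := by omega
    rw [wordB, wordB, h1, h2, h3]
    rw [if_neg (by omega : ¬ k ≤ j), List.append_assoc]
    congr 1
    rw [List.range_succ, List.map_append]
    simp [h4]

lemma rB_zero (j : ℕ) : rB j 0 = 1 := by simp [rB, wordB_zero]

lemma rB_succ (j k : ℕ) :
    rB j (k+1) = rB j k * s (if k ≤ j then j - k else k - j) := by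
  rw [rB, wordB_succ]
  simp [rB]

set_option maxHeartbeats 1000000 in
lemma gstep (J c c' : ℤ) (i : ℕ) (hJ : 1 ≤ J)
    (hcase : (1 ≤ c ∧ c ≤ J ∧ (i:ℤ) = c - 1 ∧ (c' = c - 1 ∧ 2 ≤ c ∨ c = 1 ∧ c' = -1))
           ∨ (c ≤ -1 ∧ -J < c ∧ (i:ℤ) = -c ∧ c' = c - 1))
    (x : ℤ) : gfun J c (s i x) = gfun J c' x := by
  rw [s_apply]
  have hi0 : i = 0 ↔ (i:ℤ) = 0 := by omega
  simp only [gfun, hi0]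
  split_ifs <;> omega

set_option maxHeartbeats 1000000 in
lemma rB_apply (j : ℕ) : ∀ k, k ≤ 2*j+1 → ∀ x : ℤ,
    rB j k x = gfun ((j:ℤ)+1) (phiB j k) x := by
  intro k
  induction k with
  | zero =>
      intro _ x
      rw [rB_zero]
      have : phiB j 0 = (j:ℤ)+1 := by simp [phiB]
      rw [this]
      simp only [gfun, Equiv.Perm.one_apply]
      split_ifs <;> omega
  | succ k ih =>
      intro hk x
      have hk' : k ≤ 2*j+1 := by omega
      rw [rB_succ, Equiv.Perm.mul_apply, ih hk']
      apply gstep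
      · omega
      · rcases le_or_gt k j with h | h
        · left
          have hL : ((j - k : ℕ):ℤ) = (j:ℤ) - k := by omega
          refine ⟨by simp only [phiB, if_pos h]; omega, by simp only [phiB, if_pos h]; omega,
            by rw [if_pos h, hL, phiB, if_pos h]; ring, ?_⟩
          rcases le_or_gt (k+1) j with h2 | h2
          · left
            constructor
            · rw [phiB, phiB, if_pos h, if_pos h2]; push_cast; ring
            · rw [phiB, if_pos h]; omega
          · right
            have hkj : k = j := by omega
            constructor
            · rw [phiB, if_pos h, hkj]; ring
            · rw [phiB, if_neg (by omega)]; omega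
        · right
          have hL : ((k - j : ℕ):ℤ) = (k:ℤ) - j := by omega
          rw [if_neg (by omega), hL]
          rw [phiB, phiB, if_neg (by omega), if_neg (by omega)]
          refine ⟨by omega, by omega, by ring, by push_cast; ring⟩
lemma phiB_ne_zero {j k : ℕ} : phiB j k ≠ 0 := by
  rw [phiB]; split_ifs <;> omega

lemma rB_eval_phi {j k : ℕ} (hk : k ≤ 2*j+1) : rB j k (phiB j k) = (j:ℤ)+1 := by
  rw [rB_apply j k hk]
  have := @phiB_ne_zero j k
  simp only [gfun]
  split_ifs <;> omega

lemma rB_inv_apply {j k : ℕ} (hk : k ≤ 2*j+1) : (rB j k)⁻¹ ((j:ℤ)+1) = phiB j k :=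
  (Equiv.Perm.eq_inv_iff_eq.2 (rB_eval_phi hk)).symm

lemma phiB_inj {j k1 k2 : ℕ} (h1 : k1 ≤ 2*j+1) (h2 : k2 ≤ 2*j+1)
    (h : phiB j k1 = phiB j k2) : k1 = k2 := by
  rw [phiB, phiB] at h; split_ifs at h <;> omega

lemma wordB_mem {j k t : ℕ} (hk : k ≤ 2*j+1) (ht : t ∈ wordB j k) : t ≤ j := by
  rw [wordB] at ht
  rcases List.mem_append.1 ht with h | h <;>
    · obtain ⟨u, hu, rfl⟩ := List.mem_map.1 h
      rw [List.mem_range] at hu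
      omega

lemma rB_isB {j k : ℕ} (hk : k ≤ 2*j+1) : isB (j+1) (rB j k) :=
  prodList_isB _ (fun t ht => Nat.lt_succ_of_le (wordB_mem hk ht))

lemma wordB_length {j k : ℕ} (hk : k ≤ 2*j+1) : (wordB j k).length = k := by
  simp only [wordB, List.length_append, List.length_map, List.length_range]
  omega

/-- The length statistic: inversions plus sum of absolute values of negative entries. -/
noncomputable def statB (n : ℕ) (σ : Equiv.Perm ℤ) : ℤ := (invStat n σ : ℤ) - ∑ i ∈ negSet n σ, σ i

lemma invStat_cast (n : ℕ) (σ : Equiv.Perm ℤ) : (invStat n σ : ℤ) =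
    ∑ p ∈ (Finset.Icc (1:ℤ) (n:ℤ)) ×ˢ (Finset.Icc (1:ℤ) (n:ℤ)),
      (if p.1 < p.2 ∧ σ p.2 < σ p.1 then (1:ℤ) else 0) := by
  rw [invStat, Finset.sum_boole]

lemma statB_one (n : ℕ) : statB n 1 = 0 := by
  have h1 : invStat n 1 = 0 := by
    rw [invStat, Finset.card_eq_zero, Finset.filter_eq_empty_iff]
    intro p _
    simp only [Equiv.Perm.one_apply]
    omega
  have h2 : negSet n 1 = ∅ := by
    rw [negSet, Finset.filter_eq_empty_iff]
    intro x hx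
    simp only [Finset.mem_Icc] at hx
    simp only [Equiv.Perm.one_apply]
    omega
  simp [statB, h1, h2]

lemma s_maps_Icc {n i : ℕ} (h1 : 1 ≤ i) (h2 : i + 1 ≤ n) {x : ℤ}
    (hx : x ∈ Finset.Icc (1:ℤ) (n:ℤ)) : s i x ∈ Finset.Icc (1:ℤ) (n:ℤ) := by
  have hi1 : (1:ℤ) ≤ (i:ℤ) := by exact_mod_cast h1
  have hi2 : (i:ℤ) + 1 ≤ (n:ℤ) := by exact_mod_cast h2
  simp only [Finset.mem_Icc] at hx ⊢
  rw [s_apply]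
  split_ifs <;> omega

lemma statB_mul_s {n : ℕ} {σ : Equiv.Perm ℤ} (hσ : isB n σ) {i : ℕ} (h1 : 1 ≤ i)
    (h2 : i + 1 ≤ n) :
    statB n (σ * s i) = statB n σ + (if σ (i:ℤ) < σ ((i:ℤ)+1) then 1 else -1) := by
  have hi1 : (1:ℤ) ≤ (i:ℤ) := by exact_mod_cast h1
  have hi2 : (i:ℤ) + 1 ≤ (n:ℤ) := by exact_mod_cast h2
  have e1 : s i (i:ℤ) = (i:ℤ)+1 := by rw [s_apply]; split_ifs <;> omega
  have e2 : s i ((i:ℤ)+1) = (i:ℤ) := by rw [s_apply]; split_ifs <;> omega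
  have hneg : ∑ p ∈ negSet n (σ * s i), (σ * s i) p = ∑ p ∈ negSet n σ, σ p := by
    rw [negSet, negSet, Finset.sum_filter, Finset.sum_filter]
    refine Finset.sum_nbij' (fun x => s i x) (fun x => s i x)
      (fun x hx => s_maps_Icc h1 h2 hx) (fun x hx => s_maps_Icc h1 h2 hx)
      (fun x _ => s_s i x) (fun x _ => s_s i x) (fun x _ => ?_)
    simp only [Equiv.Perm.mul_apply, s_s]
    rfl
  have hinv : (invStat n (σ * s i) : ℤ) =
      (invStat n σ : ℤ) + (if σ (i:ℤ) < σ ((i:ℤ)+1) then 1 else -1) := by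
    rw [invStat_cast, invStat_cast]
    have hre : ∑ p ∈ (Finset.Icc (1:ℤ) (n:ℤ)) ×ˢ (Finset.Icc (1:ℤ) (n:ℤ)),
        (if p.1 < p.2 ∧ (σ * s i) p.2 < (σ * s i) p.1 then (1:ℤ) else 0)
        = ∑ p ∈ (Finset.Icc (1:ℤ) (n:ℤ)) ×ˢ (Finset.Icc (1:ℤ) (n:ℤ)),
        (if s i p.1 < s i p.2 ∧ σ p.2 < σ p.1 then (1:ℤ) else 0) := by
      refine Finset.sum_nbij' (fun p => (s i p.1, s i p.2)) (fun p => (s i p.1, s i p.2))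
        ?_ ?_ ?_ ?_ ?_
      · rintro ⟨x, y⟩ hp
        rw [Finset.mem_product] at hp ⊢
        exact ⟨s_maps_Icc h1 h2 hp.1, s_maps_Icc h1 h2 hp.2⟩
      · rintro ⟨x, y⟩ hp
        rw [Finset.mem_product] at hp ⊢
        exact ⟨s_maps_Icc h1 h2 hp.1, s_maps_Icc h1 h2 hp.2⟩
      · rintro ⟨x, y⟩ _; simp [s_s]
      · rintro ⟨x, y⟩ _; simp [s_s]
      · rintro ⟨x, y⟩ _
        simp only [Equiv.Perm.mul_apply, s_s]
        rfl
    rw [hre]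
    have hdiff : ∑ p ∈ (Finset.Icc (1:ℤ) (n:ℤ)) ×ˢ (Finset.Icc (1:ℤ) (n:ℤ)),
        ((if s i p.1 < s i p.2 ∧ σ p.2 < σ p.1 then (1:ℤ) else 0)
          - (if p.1 < p.2 ∧ σ p.2 < σ p.1 then (1:ℤ) else 0))
        = (if σ (i:ℤ) < σ ((i:ℤ)+1) then 1 else -1) := by
      rw [Finset.sum_eq_add ((i:ℤ), (i:ℤ)+1) ((i:ℤ)+1, (i:ℤ))]
      · simp only
        rw [e1, e2]
        have hne : σ (i:ℤ) ≠ σ ((i:ℤ)+1) := fun h => by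
          have := σ.injective h; omega
        have hc1 : ¬((i:ℤ)+1 < (i:ℤ) ∧ σ ((i:ℤ)+1) < σ (i:ℤ)) := by omega
        have hc2 : ¬((i:ℤ)+1 < (i:ℤ) ∧ σ (i:ℤ) < σ ((i:ℤ)+1)) := by omega
        rw [if_neg hc1, if_neg hc2]
        rcases lt_or_gt_of_ne hne with h | h
        · rw [if_pos h, if_neg (by omega : ¬(((i:ℤ) < (i:ℤ)+1) ∧ σ ((i:ℤ)+1) < σ (i:ℤ))),
            if_pos (⟨by omega, h⟩ : ((i:ℤ) < (i:ℤ)+1) ∧ σ (i:ℤ) < σ ((i:ℤ)+1))]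
          norm_num
        · rw [if_neg (by omega : ¬ σ (i:ℤ) < σ ((i:ℤ)+1)),
            if_pos (⟨by omega, h⟩ : ((i:ℤ) < (i:ℤ)+1) ∧ σ ((i:ℤ)+1) < σ (i:ℤ)),
            if_neg (by omega : ¬(((i:ℤ) < (i:ℤ)+1) ∧ σ (i:ℤ) < σ ((i:ℤ)+1)))]
          norm_num
      · intro h
        have := congrArg Prod.snd h
        simp only at this
        omega
      · intro p hp hne
        rw [Finset.mem_product, Finset.mem_Icc, Finset.mem_Icc] at hp
        have hxy : ¬(p.1 = (i:ℤ) ∧ p.2 = (i:ℤ)+1) := fun ⟨hx, hy⟩ =>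
          hne.1 (Prod.ext hx hy)
        have hyx : ¬(p.1 = (i:ℤ)+1 ∧ p.2 = (i:ℤ)) := fun ⟨hx, hy⟩ =>
          hne.2 (Prod.ext hx hy)
        have horder : s i p.1 < s i p.2 ↔ p.1 < p.2 := by
          rw [s_apply, s_apply]
          split_ifs <;> omega
        simp only [horder, sub_self]
      · intro h
        exact absurd (Finset.mem_product.2 ⟨Finset.mem_Icc.2 ⟨by omega, by omega⟩,
          Finset.mem_Icc.2 ⟨by omega, by omega⟩⟩) h
      · intro h
        exact absurd (Finset.mem_product.2 ⟨Finset.mem_Icc.2 ⟨by omega, by omega⟩,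
          Finset.mem_Icc.2 ⟨by omega, by omega⟩⟩) h
    have hsub := Finset.sum_sub_distrib (s := (Finset.Icc (1:ℤ) (n:ℤ)) ×ˢ (Finset.Icc (1:ℤ) (n:ℤ)))
      (f := fun p => (if s i p.1 < s i p.2 ∧ σ p.2 < σ p.1 then (1:ℤ) else 0))
      (g := fun p => (if p.1 < p.2 ∧ σ p.2 < σ p.1 then (1:ℤ) else 0))
    rw [hsub] at hdiff
    omega
  rw [statB, statB, hneg, hinv]
  ring
lemma count_abs_lt {n : ℕ} {σ : Equiv.Perm ℤ} (hσ : isB n σ) {A : ℤ} (hA1 : 1 ≤ A)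
    (hAn : A ≤ (n:ℤ)) :
    ((((Finset.Icc (1:ℤ) (n:ℤ)).filter (fun b => |σ b| < A)).card : ℤ) = A - 1) := by
  have hcard : ((Finset.Icc (1:ℤ) (n:ℤ)).filter (fun b => |σ b| < A)).card
      = (Finset.Icc (1:ℤ) (A-1)).card := by
    apply Finset.card_nbij (fun b => |σ b|)
    · intro b hb
      simp only [Finset.mem_coe, Finset.mem_filter, Finset.mem_Icc] at hb ⊢
      have h0 : σ b ≠ 0 := hσ.apply_ne_zero (by omega)
      constructor
      · rcases abs_cases (σ b) with ⟨h, _⟩ | ⟨h, _⟩ <;> omega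
      · omega
    · intro b hb c hc h
      simp only [Finset.mem_coe, Finset.mem_filter, Finset.mem_Icc] at hb hc
      rcases abs_eq_abs.1 h with h' | h'
      · exact σ.injective h'
      · have : σ b = σ (-c) := by rw [hσ.1]; omega
        have := σ.injective this
        omega
    · intro c hc
      simp only [Finset.mem_coe, Finset.mem_Icc] at hc
      have hcn : |c| ≤ (n:ℤ) := by rw [abs_le]; omega
      have hb := hσ.inv.bound hcn
      have hbc : σ (σ⁻¹ c) = c := σ.apply_symm_apply c
      have hb0 : σ⁻¹ c ≠ 0 := by
        intro h
        have h2 : σ (σ⁻¹ c) = σ 0 := by rw [h]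
        rw [hbc, hσ.zero] at h2
        omega
      rcases le_or_gt (σ⁻¹ c) 0 with h | h
      · refine ⟨-(σ⁻¹ c), ?_, ?_⟩
        · simp only [Finset.mem_coe, Finset.mem_filter, Finset.mem_Icc]
          have : σ (-(σ⁻¹ c)) = -c := by rw [hσ.1, hbc]
          rw [this]
          rw [abs_le] at hb
          constructor
          · constructor <;> omega
          · rw [abs_neg, abs_lt]; omega
        · have h3 : σ (-(σ⁻¹ c)) = -c := by rw [hσ.1, hbc]
          simp only
          rw [h3, abs_neg, abs_of_nonneg (by omega)]
      · refine ⟨σ⁻¹ c, ?_, ?_⟩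
        · simp only [Finset.mem_coe, Finset.mem_filter, Finset.mem_Icc]
          rw [hbc]
          rw [abs_le] at hb
          refine ⟨⟨by omega, by omega⟩, by rw [abs_lt]; omega⟩
        · simp only
          rw [hbc, abs_of_nonneg (by omega)]
  rw [hcard, Int.card_Icc]
  omega

lemma s0_one : s 0 (1:ℤ) = -1 := by rw [s_apply]; norm_num

lemma s0_fix {y : ℤ} (h1 : y ≠ 1) (h2 : y ≠ -1) : s 0 y = y := by
  rw [s_apply, if_pos rfl, if_neg h1, if_neg h2]

lemma statB_mul_s0 {n : ℕ} {σ : Equiv.Perm ℤ} (hσ : isB n σ) (hn : 1 ≤ n) :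
    statB n (σ * s 0) = statB n σ + (if 0 < σ 1 then 1 else -1) := by
  set a := σ 1 with ha
  have hn1 : (1:ℤ) ≤ (n:ℤ) := by exact_mod_cast hn
  have ha0 : a ≠ 0 := hσ.apply_ne_zero one_ne_zero
  have han : |a| ≤ (n:ℤ) := hσ.bound (by rw [abs_one]; omega)
  have hsneg : σ (-1) = -a := by rw [hσ.1]
  have hinja : ∀ y : ℤ, σ y = a → y = 1 := fun y h => σ.injective (h.trans ha)
  have hinjna : ∀ y : ℤ, σ y = -a → y = -1 := fun y h => σ.injective (by rw [h, hsneg])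
  have key : (invStat n (σ * s 0) : ℤ) - invStat n σ =
      ∑ y ∈ Finset.Icc (1:ℤ) (n:ℤ),
        ((if 1 < y ∧ σ y < -a then (1:ℤ) else 0) - (if 1 < y ∧ σ y < a then 1 else 0)) := by
    rw [invStat_cast, invStat_cast, ← Finset.sum_sub_distrib, Finset.sum_product]
    rw [Finset.sum_eq_single (1:ℤ)]
    · apply Finset.sum_congr rfl
      intro y hy
      simp only [Finset.mem_Icc] at hy
      simp only [Equiv.Perm.mul_apply, s0_one, hsneg]
      rcases eq_or_ne y 1 with rfl | hy1
      · norm_num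
      · simp only [s0_fix hy1 (by omega : y ≠ -1)]
        rfl
    · intro x hx hx1
      simp only [Finset.mem_Icc] at hx
      apply Finset.sum_eq_zero
      intro y hy
      simp only [Finset.mem_Icc] at hy
      simp only [Equiv.Perm.mul_apply]
      simp only [s0_fix hx1 (by omega : x ≠ -1)]
      rcases eq_or_ne y 1 with rfl | hy1
      · rw [if_neg (by omega : ¬(x < 1 ∧ σ (s 0 1) < σ x)),
          if_neg (by omega : ¬(x < 1 ∧ σ 1 < σ x))]
        ring
      · simp only [s0_fix hy1 (by omega : y ≠ -1)]
        ring
    · intro h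
      simp only [Finset.mem_Icc] at h
      omega
  have hT : ∑ y ∈ Finset.Icc (1:ℤ) (n:ℤ),
        ((if 1 < y ∧ σ y < -a then (1:ℤ) else 0) - (if 1 < y ∧ σ y < a then 1 else 0))
      = (if 0 < a then -(a-1) else -a-1) := by
    rcases lt_or_gt_of_ne ha0 with hneg | hpos
    · rw [if_neg (by omega : ¬ (0:ℤ) < a)]
      have hpt : ∀ y ∈ Finset.Icc (1:ℤ) (n:ℤ),
          ((if 1 < y ∧ σ y < -a then (1:ℤ) else 0) - (if 1 < y ∧ σ y < a then 1 else 0))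
          = (if |σ y| < -a then (1:ℤ) else 0) := by
        intro y hy
        simp only [Finset.mem_Icc] at hy
        have f1 : σ y ≠ -a := fun h => by have := hinjna y h; omega
        simp only [abs_lt]
        rcases eq_or_ne (σ y) a with hc | hc
        · have hy1 : y = 1 := hinja y hc
          split_ifs <;> omega
        · have hy1 : y ≠ 1 := fun h => hc (by rw [h])
          split_ifs <;> omega
      rw [Finset.sum_congr rfl hpt, Finset.sum_boole]
      exact count_abs_lt hσ (by omega : (1:ℤ) ≤ -a) (by rw [abs_le] at han; omega)
    · rw [if_pos hpos]
      have hpt : ∀ y ∈ Finset.Icc (1:ℤ) (n:ℤ),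
          ((if 1 < y ∧ σ y < -a then (1:ℤ) else 0) - (if 1 < y ∧ σ y < a then 1 else 0))
          = -(if |σ y| < a then (1:ℤ) else 0) := by
        intro y hy
        simp only [Finset.mem_Icc] at hy
        have f1 : σ y ≠ -a := fun h => by have := hinjna y h; omega
        simp only [abs_lt]
        rcases eq_or_ne (σ y) a with hc | hc
        · have hy1 : y = 1 := hinja y hc
          split_ifs <;> omega
        · have hy1 : y ≠ 1 := fun h => hc (by rw [h])
          split_ifs <;> omega
      rw [Finset.sum_congr rfl hpt, Finset.sum_neg_distrib, Finset.sum_boole]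
      rw [count_abs_lt hσ (by omega : (1:ℤ) ≤ a) (by rw [abs_le] at han; omega)]
  have hnegsum : ∑ p ∈ negSet n (σ * s 0), (σ * s 0) p = (∑ p ∈ negSet n σ, σ p) - a := by
    have hd : ∑ y ∈ Finset.Icc (1:ℤ) (n:ℤ),
        ((if (σ * s 0) y < 0 then (σ * s 0) y else 0) - (if σ y < 0 then σ y else 0)) = -a := by
      rw [Finset.sum_eq_single (1:ℤ)]
      · simp only [Equiv.Perm.mul_apply, s0_one, hsneg]
        rcases lt_or_gt_of_ne ha0 with h | h
        · rw [if_neg (by omega : ¬ -a < (0:ℤ)), if_pos (by omega : a < (0:ℤ))]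
          ring
        · rw [if_pos (by omega : -a < (0:ℤ)), if_neg (by omega : ¬ a < (0:ℤ))]
          ring
      · intro y hy hy1
        simp only [Finset.mem_Icc] at hy
        simp only [Equiv.Perm.mul_apply]
        simp only [s0_fix hy1 (by omega : y ≠ -1)]
        exact sub_self _
      · intro h
        simp only [Finset.mem_Icc] at h
        omega
    rw [Finset.sum_sub_distrib] at hd
    rw [negSet, negSet, Finset.sum_filter, Finset.sum_filter]
    linarith [hd]
  rw [statB, statB, hnegsum]
  rcases lt_or_gt_of_ne ha0 with h | h
  · rw [if_neg (by omega : ¬ (0:ℤ) < a)]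
    rw [if_neg (by omega : ¬ (0:ℤ) < a)] at hT
    linarith [key, hT]
  · rw [if_pos h]
    rw [if_pos h] at hT
    linarith [key, hT]
lemma statB_word {n : ℕ} (l : List ℕ) (hl : ∀ i ∈ l, i < n) :
    statB n ((l.map s).prod) ≤ (l.length : ℤ) := by
  induction l using List.reverseRecOn with
  | nil => simp [statB_one]
  | append_singleton l i ih =>
      have hl' : ∀ j ∈ l, j < n := fun j hj => hl j (by simp [hj])
      have hi : i < n := hl i (by simp)
      have hτ : isB n (l.map s).prod := prodList_isB l hl'
      have hprod : ((l ++ [i]).map s).prod = (l.map s).prod * s i := by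
        simp
      rw [hprod]
      have hlen : ((l ++ [i]).length : ℤ) = (l.length : ℤ) + 1 := by
        simp
      rw [hlen]
      rcases Nat.eq_zero_or_pos i with rfl | hipos
      · have := statB_mul_s0 hτ (by omega : 1 ≤ n)
        have hih := ih hl'
        split_ifs at this <;> omega
      · have := statB_mul_s hτ hipos hi
        have hih := ih hl'
        split_ifs at this <;> omega

lemma statB_rB {n j : ℕ} (hjn : j < n) {τ : Equiv.Perm ℤ} (hτ : isB j τ) :
    ∀ k, k ≤ 2*j+1 → statB n (τ * rB j k) = statB n τ + k := by
  intro k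
  induction k with
  | zero => rw [rB_zero, mul_one]; simp
  | succ k ih =>
      intro hk
      have hk' : k ≤ 2*j+1 := by omega
      have hσk : isB n (τ * rB j k) :=
        (hτ.mono (by omega)).mul ((rB_isB hk').mono (by omega))
      have happ : ∀ x : ℤ, (τ * rB j k) x = τ (gfun ((j:ℤ)+1) (phiB j k) x) := by
        intro x
        rw [Equiv.Perm.mul_apply, rB_apply j k hk']
      have htop : τ ((j:ℤ)+1) = (j:ℤ)+1 := by
        apply hτ.2
        rw [abs_of_nonneg (by positivity)]
        omega
      have hbot : τ (-((j:ℤ)+1)) = -((j:ℤ)+1) := by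
        apply hτ.2
        rw [abs_neg, abs_of_nonneg (by positivity)]
        omega
      rw [rB_succ, ← mul_assoc]
      rcases le_or_gt k j with h | h
      · rw [if_pos h]
        have hphi : phiB j k = (j:ℤ)+1-k := by rw [phiB, if_pos h]
        rcases eq_or_ne k j with hkj | hkj
        · have hkz : (k:ℤ) = (j:ℤ) := by omega
          have h0 : j - k = 0 := by omega
          rw [h0]
          have hc1 : (τ * rB j k) 1 = (j:ℤ)+1 := by
            rw [happ]
            have : gfun ((j:ℤ)+1) (phiB j k) 1 = (j:ℤ)+1 := by
              rw [hphi]; simp only [gfun]; split_ifs <;> omega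
            rw [this, htop]
          rw [statB_mul_s0 hσk (by omega : 1 ≤ n), ih hk', if_pos (by omega : (0:ℤ) < (τ * rB j k) 1)]
          push_cast
          ring
        · have h1 : 1 ≤ j - k := by omega
          have h2 : (j - k) + 1 ≤ n := by omega
          have hL : ((j - k : ℕ) : ℤ) = (j:ℤ) - k := by omega
          have hv1 : (τ * rB j k) ((j:ℤ) - k) = τ ((j:ℤ) - k) := by
            rw [happ]
            congr 1
            rw [hphi]; simp only [gfun]; split_ifs <;> omega
          have hv2 : (τ * rB j k) ((j:ℤ) - k + 1) = (j:ℤ)+1 := by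
            rw [happ]
            have : gfun ((j:ℤ)+1) (phiB j k) ((j:ℤ) - k + 1) = (j:ℤ)+1 := by
              rw [hphi]; simp only [gfun]; split_ifs <;> omega
            rw [this, htop]
          have hbnd : |τ ((j:ℤ) - k)| ≤ (j:ℤ) := hτ.bound (by rw [abs_le]; omega)
          rw [statB_mul_s hσk h1 h2, ih hk', hL, hv1, hv2,
            if_pos (by rw [abs_le] at hbnd; omega : τ ((j:ℤ) - k) < (j:ℤ)+1)]
          push_cast
          ring
      · rw [if_neg (by omega)]
        have hphi : phiB j k = (j:ℤ)-k := by rw [phiB, if_neg (by omega)]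
        have h1 : 1 ≤ k - j := by omega
        have h2 : (k - j) + 1 ≤ n := by omega
        have hL : ((k - j : ℕ) : ℤ) = (k:ℤ) - j := by omega
        have hv1 : (τ * rB j k) ((k:ℤ) - j) = -((j:ℤ)+1) := by
          rw [happ]
          have : gfun ((j:ℤ)+1) (phiB j k) ((k:ℤ) - j) = -((j:ℤ)+1) := by
            rw [hphi]; simp only [gfun]; split_ifs <;> omega
          rw [this, hbot]
        have hv2 : (τ * rB j k) ((k:ℤ) - j + 1) = τ ((k:ℤ) - j) := by
          rw [happ]
          congr 1
          rw [hphi]; simp only [gfun]; split_ifs <;> omega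
        have hbnd : |τ ((k:ℤ) - j)| ≤ (j:ℤ) := hτ.bound (by rw [abs_le]; omega)
        rw [statB_mul_s hσk h1 h2, ih hk', hL, hv1, hv2,
          if_pos (by rw [abs_le] at hbnd; omega : -((j:ℤ)+1) < τ ((k:ℤ) - j))]
        push_cast
        ring

lemma statB_ext {n : ℕ} {τ : Equiv.Perm ℤ} (hτ : isB n τ) : statB (n+1) τ = statB n τ := by
  have htop : τ ((n:ℤ)+1) = (n:ℤ)+1 := by
    apply hτ.2
    rw [abs_of_nonneg (by positivity)]
    omega
  have hcast : ((n+1 : ℕ) : ℤ) = (n:ℤ) + 1 := by push_cast; ring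
  have hinv : invStat (n+1) τ = invStat n τ := by
    rw [invStat, invStat]
    congr 1
    ext p
    simp only [Finset.mem_filter, Finset.mem_product, Finset.mem_Icc, hcast]
    constructor
    · rintro ⟨⟨⟨h11, h12⟩, h21, h22⟩, h3, h4⟩
      have hp2 : p.2 ≤ (n:ℤ) := by
        by_contra hc
        have hp2e : p.2 = (n:ℤ)+1 := by omega
        have hp1 : p.1 ≤ (n:ℤ) := by omega
        have := hτ.bound (x := p.1) (by rw [abs_le]; omega)
        rw [hp2e, htop] at h4
        rw [abs_le] at this
        omega
      exact ⟨⟨⟨h11, by omega⟩, h21, hp2⟩, h3, h4⟩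
    · rintro ⟨⟨⟨h11, h12⟩, h21, h22⟩, h3, h4⟩
      exact ⟨⟨⟨h11, by omega⟩, h21, by omega⟩, h3, h4⟩
  have hneg : negSet (n+1) τ = negSet n τ := by
    rw [negSet, negSet]
    ext x
    simp only [Finset.mem_filter, Finset.mem_Icc, hcast]
    constructor
    · rintro ⟨⟨h1, h2⟩, h3⟩
      refine ⟨⟨h1, ?_⟩, h3⟩
      by_contra hc
      have : x = (n:ℤ)+1 := by omega
      rw [this, htop] at h3
      omega
    · rintro ⟨⟨h1, h2⟩, h3⟩
      exact ⟨⟨h1, by omega⟩, h3⟩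
  rw [statB, statB, hinv, hneg]
lemma prodB_succ {n : ℕ} (ks : Fin (n+1) → ℕ) :
    (List.ofFn fun j : Fin (n+1) => rB j.1 (ks j)).prod
      = (List.ofFn fun j : Fin n => rB j.1 (ks j.castSucc)).prod * rB n (ks (Fin.last n)) := by
  rw [List.ofFn_succ']
  rw [List.prod_concat]
  rfl

lemma prodB_isB {n : ℕ} (ks : Fin n → ℕ) (hks : ∀ j : Fin n, ks j ≤ 2 * j.1 + 1) :
    isB n (List.ofFn fun j : Fin n => rB j.1 (ks j)).prod := by
  induction n with
  | zero => simpa using isB.one 0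
  | succ n ih =>
      rw [prodB_succ]
      exact ((ih _ (fun j => hks j.castSucc)).mono (by omega)).mul
        ((rB_isB (by simpa using hks (Fin.last n))).mono (by omega))

lemma exists_ks : ∀ (n : ℕ) (σ : Equiv.Perm ℤ), isB n σ →
    ∃ ks : Fin n → ℕ, (∀ j : Fin n, ks j ≤ 2 * j.1 + 1) ∧
      (List.ofFn fun j : Fin n => rB j.1 (ks j)).prod = σ := by
  intro n
  induction n with
  | zero =>
      intro σ hσ
      refine ⟨fun j => 0, fun j => j.elim0, ?_⟩
      simp only [List.ofFn_zero, List.prod_nil]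
      ext x
      rcases eq_or_ne x 0 with rfl | hx
      · rw [hσ.zero]; rfl
      · rw [hσ.2 x (by simpa using hx)]; rfl
  | succ n ih =>
      intro σ hσ
      set f := σ⁻¹ ((n:ℤ)+1) with hf
      have hcast : ((n+1 : ℕ) : ℤ) = (n:ℤ) + 1 := by push_cast; ring
      have hf0 : f ≠ 0 := hσ.inv.apply_ne_zero (by omega)
      have hfb : |f| ≤ (n:ℤ)+1 := by
        have := hσ.inv.bound (x := (n:ℤ)+1) (by rw [abs_of_nonneg (by positivity)]; omega)
        rw [hcast] at this
        exact this
      rw [abs_le] at hfb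
      set k : ℕ := (if 0 < f then (n:ℤ)+1-f else (n:ℤ)-f).toNat with hkdef
      have hkz : (k:ℤ) = if 0 < f then (n:ℤ)+1-f else (n:ℤ)-f := by
        rw [hkdef, Int.toNat_of_nonneg]
        split_ifs <;> omega
      have hk : k ≤ 2*n+1 := by
        split_ifs at hkz <;> omega
      have hphi : phiB n k = f := by
        rw [phiB]
        split_ifs at hkz ⊢ <;> omega
      have hrtop : (rB n k)⁻¹ ((n:ℤ)+1) = f := by rw [rB_inv_apply hk, hphi]
      have hτtop : (σ * (rB n k)⁻¹) ((n:ℤ)+1) = (n:ℤ)+1 := by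
        rw [Equiv.Perm.mul_apply, hrtop, hf, Equiv.Perm.inv_def, Equiv.apply_symm_apply]
      have hBig : isB (n+1) (σ * (rB n k)⁻¹) := hσ.mul (rB_isB hk).inv
      have hτ : isB n (σ * (rB n k)⁻¹) := by
        refine ⟨hBig.1, fun x hx => ?_⟩
        rcases eq_or_ne x ((n:ℤ)+1) with rfl | hx1
        · exact hτtop
        · rcases eq_or_ne x (-((n:ℤ)+1)) with rfl | hx2
          · have := hBig.1 ((n:ℤ)+1)
            rw [hτtop] at this
            exact this
          · apply hBig.2
            rw [hcast]
            rw [lt_abs] at hx ⊢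
            omega
      obtain ⟨ks', hks'b, hks'p⟩ := ih _ hτ
      refine ⟨Fin.snoc ks' k, ?_, ?_⟩
      · intro j
        refine Fin.lastCases ?_ ?_ j
        · simpa using hk
        · intro i
          simpa using hks'b i
      · rw [prodB_succ]
        have h1 : (fun j : Fin n => rB j.1 ((Fin.snoc ks' k : Fin (n+1) → ℕ) j.castSucc))
            = fun j : Fin n => rB j.1 (ks' j) := by
          funext j
          rw [Fin.snoc_castSucc]
        rw [h1, Fin.snoc_last, hks'p]
        group

lemma unique_ks : ∀ (n : ℕ) (ks ks' : Fin n → ℕ),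
    (∀ j : Fin n, ks j ≤ 2 * j.1 + 1) → (∀ j : Fin n, ks' j ≤ 2 * j.1 + 1) →
    (List.ofFn fun j : Fin n => rB j.1 (ks j)).prod
      = (List.ofFn fun j : Fin n => rB j.1 (ks' j)).prod → ks = ks' := by
  intro n
  induction n with
  | zero => intro ks ks' _ _ _; funext j; exact j.elim0
  | succ n ih =>
      intro ks ks' hb hb' hp
      rw [prodB_succ, prodB_succ] at hp
      set k := ks (Fin.last n) with hkdef
      set k' := ks' (Fin.last n) with hk'def
      have hk : k ≤ 2*n+1 := by simpa using hb (Fin.last n)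
      have hk' : k' ≤ 2*n+1 := by simpa using hb' (Fin.last n)
      set pre := (List.ofFn fun j : Fin n => rB j.1 (ks j.castSucc)).prod with hpre
      set pre' := (List.ofFn fun j : Fin n => rB j.1 (ks' j.castSucc)).prod with hpre'
      have hpreB : isB n pre := prodB_isB _ (fun j => by simpa using hb j.castSucc)
      have hpreB' : isB n pre' := prodB_isB _ (fun j => by simpa using hb' j.castSucc)
      have htop : ∀ (q : Equiv.Perm ℤ) (m : ℕ), isB n q → m ≤ 2*n+1 →
          (q * rB n m)⁻¹ ((n:ℤ)+1) = phiB n m := by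
        intro q m hq hm
        rw [mul_inv_rev, Equiv.Perm.mul_apply]
        have : q⁻¹ ((n:ℤ)+1) = (n:ℤ)+1 := by
          apply hq.inv.2
          rw [abs_of_nonneg (by positivity)]
          omega
        rw [this, rB_inv_apply hm]
      have heq : phiB n k = phiB n k' := by
        rw [← htop pre k hpreB hk, ← htop pre' k' hpreB' hk', hp]
      have hkk : k = k' := phiB_inj hk hk' heq
      have hpp : pre = pre' := by
        have := hp
        rw [hkk] at this
        exact mul_right_cancel this
      have hih := ih (fun j => ks j.castSucc) (fun j => ks' j.castSucc)
        (fun j => by simpa using hb j.castSucc) (fun j => by simpa using hb' j.castSucc) hpp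
      funext j
      refine Fin.lastCases ?_ ?_ j
      · rw [← hkdef, ← hk'def, hkk]
      · intro i
        exact congrFun hih i

lemma stat_prodB : ∀ (n : ℕ) (ks : Fin n → ℕ), (∀ j : Fin n, ks j ≤ 2 * j.1 + 1) →
    statB n (List.ofFn fun j : Fin n => rB j.1 (ks j)).prod = ∑ j : Fin n, (ks j : ℤ) := by
  intro n
  induction n with
  | zero => intro ks _; simpa using statB_one 0
  | succ n ih =>
      intro ks hb
      rw [prodB_succ]
      have hk : ks (Fin.last n) ≤ 2*n+1 := by simpa using hb (Fin.last n)
      have hpreB : isB n (List.ofFn fun j : Fin n => rB j.1 (ks j.castSucc)).prod :=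
        prodB_isB _ (fun j => by simpa using hb j.castSucc)
      rw [statB_rB (by omega) hpreB _ hk]
      rw [statB_ext hpreB, ih _ (fun j => by simpa using hb j.castSucc)]
      rw [Fin.sum_univ_castSucc]

/-- Every `σ ∈ B_n` has a unique presentation `σ = σ₀ ⋯ σ_{n-1}` with
`σ_j ∈ R_j^B` (here `σ_j = rB j (k j)`, the element of `R_j^B` of word length `k j`);
moreover the resulting expression in the Coxeter generators is reduced, i.e. the total
word length `∑ j, k j` equals the Coxeter length of `σ`. -/
theorem bCanonicalPresentation (n : ℕ) (σ : Equiv.Perm ℤ) (hσ : isB n σ) :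
    (∃! ks : Fin n → ℕ, (∀ j : Fin n, ks j ≤ 2 * j.1 + 1) ∧
        (List.ofFn fun j : Fin n => rB j.1 (ks j)).prod = σ) ∧
    (∀ ks : Fin n → ℕ, (∀ j : Fin n, ks j ≤ 2 * j.1 + 1) →
        (List.ofFn fun j : Fin n => rB j.1 (ks j)).prod = σ →
        ellB n σ = ∑ j : Fin n, ks j) := by

  obtain ⟨ks0, hb0, hp0⟩ := exists_ks n σ hσ
  constructor
  · exact ⟨ks0, ⟨hb0, hp0⟩,
      fun ks' h => unique_ks n ks' ks0 h.1 hb0 (h.2.trans hp0.symm)⟩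
  · intro ks hb hp
    set W := (List.ofFn fun j : Fin n => wordB j.1 (ks j)).flatten with hW
    have hlen : W.length = ∑ j : Fin n, ks j := by
      rw [hW, List.length_flatten, List.map_ofFn, List.sum_ofFn]
      apply Finset.sum_congr rfl
      intro j _
      exact wordB_length (hb j)
    have hmem : ∀ i ∈ W, i < n := by
      intro i hi
      rw [hW, List.mem_flatten] at hi
      obtain ⟨l, hl, hil⟩ := hi
      rw [List.mem_ofFn] at hl
      obtain ⟨j, rfl⟩ := hl
      have h1 := wordB_mem (hb j) hil
      have h2 := j.2
      omega
    have hprodW : (W.map s).prod = σ := by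
      rw [hW, List.map_flatten, List.prod_flatten, List.map_ofFn, List.map_ofFn]
      exact hp
    have hmemS : (∑ j : Fin n, ks j) ∈
        {k | ∃ l : List ℕ, l.length = k ∧ (∀ i ∈ l, i < n) ∧ (l.map s).prod = σ} :=
      ⟨W, hlen, hmem, hprodW⟩
    have hle : ellB n σ ≤ ∑ j : Fin n, ks j := Nat.sInf_le hmemS
    have hstat : statB n σ = ∑ j : Fin n, (ks j : ℤ) := by
      rw [← hp]
      exact stat_prodB n ks hb
    obtain ⟨l, hlenl, hml, hpl⟩ := Nat.sInf_mem (Set.nonempty_of_mem hmemS)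
    have hge : statB n σ ≤ (ellB n σ : ℤ) := by
      have h1 := statB_word l hml
      rw [hpl] at h1
      calc statB n σ ≤ (l.length : ℤ) := h1
        _ = (ellB n σ : ℤ) := by rw [hlenl]; rfl
    have hcast : (∑ j : Fin n, (ks j : ℤ)) = ((∑ j : Fin n, ks j : ℕ) : ℤ) := by
      push_cast
      rfl
    rw [hstat, hcast] at hge
    omega
end SignedEven
end

section
/- The generators a_0, a_1, ..., a_{n-1} of L_{n+1} = C_2 wr A_{n+1} satisfy: a_0^2 = 1, (a_0 a_1)^6 = 1, (a_0 a_1^{-1})^6 = 1, and (a_0 a_i)^4 = 1 for all 1 < i <= n-1. -/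
open Equiv Finset

namespace SignedEven

private lemma sw1 {u v x : ℤ} (h1 : x ≠ u) (h2 : x ≠ v) : Equiv.swap u v x = x :=
  swap_apply_of_ne_of_ne h1 h2

private lemma pow4_cycle (g : Equiv.Perm ℤ) (p q r t : ℤ) (h1 : g p = q) (h2 : g q = r)
    (h3 : g r = t) (h4 : g t = p) : (g ^ 4) p = p := by
  simp [pow_succ, Perm.mul_apply, h1, h2, h3, h4]

private lemma pow6_cycle (g : Equiv.Perm ℤ) (p q r t u v : ℤ) (h1 : g p = q) (h2 : g q = r)
    (h3 : g r = t) (h4 : g t = u) (h5 : g u = v) (h6 : g v = p) : (g ^ 6) p = p := by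
  simp [pow_succ, Perm.mul_apply, h1, h2, h3, h4, h5, h6]

private lemma expandG (i : ℕ) (hi0 : i ≠ 0) (x : ℤ) : (a 0 * a i) x =
    Equiv.swap 1 (-1) (Equiv.swap 1 2 (Equiv.swap (-1) (-2)
      (Equiv.swap ((i:ℤ)+1) ((i:ℤ)+2) (Equiv.swap (-((i:ℤ)+1)) (-((i:ℤ)+2)) x)))) := by
  have h1 : (((i:ℕ) + 1 : ℕ) : ℤ) = (i:ℤ) + 1 := by push_cast; ring
  have h2 : ((i:ℤ) + 1) + 1 = (i:ℤ) + 2 := by ring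
  simp [a, s, hi0, Perm.mul_apply, h1, h2]

section
variable {i : ℕ} (hi : 1 < i)
include hi

private lemma hle : (2:ℤ) ≤ (i:ℤ) := by exact_mod_cast hi

private lemma G1 : (a 0 * a i) (1:ℤ) = 2 := by
  have h2 := hle hi
  have k1 : Equiv.swap (-((i:ℤ)+1)) (-((i:ℤ)+2)) (1:ℤ) = 1 := sw1 (by omega) (by omega)
  have k2 : Equiv.swap ((i:ℤ)+1) ((i:ℤ)+2) (1:ℤ) = 1 := sw1 (by omega) (by omega)
  have k3 : Equiv.swap (-1:ℤ) (-2) (1:ℤ) = 1 := sw1 (by omega) (by omega)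
  have k4 : Equiv.swap (1:ℤ) 2 (1:ℤ) = 2 := swap_apply_left _ _
  have k5 : Equiv.swap (1:ℤ) (-1) (2:ℤ) = 2 := sw1 (by omega) (by omega)
  rw [expandG i (by omega), k1, k2, k3, k4, k5]

private lemma G2 : (a 0 * a i) (2:ℤ) = -1 := by
  have h2 := hle hi
  have k1 : Equiv.swap (-((i:ℤ)+1)) (-((i:ℤ)+2)) (2:ℤ) = 2 := sw1 (by omega) (by omega)
  have k2 : Equiv.swap ((i:ℤ)+1) ((i:ℤ)+2) (2:ℤ) = 2 := sw1 (by omega) (by omega)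
  have k3 : Equiv.swap (-1:ℤ) (-2) (2:ℤ) = 2 := sw1 (by omega) (by omega)
  have k4 : Equiv.swap (1:ℤ) 2 (2:ℤ) = 1 := swap_apply_right _ _
  have k5 : Equiv.swap (1:ℤ) (-1) (1:ℤ) = -1 := swap_apply_left _ _
  rw [expandG i (by omega), k1, k2, k3, k4, k5]

private lemma G3 : (a 0 * a i) (-1:ℤ) = -2 := by
  have h2 := hle hi
  have k1 : Equiv.swap (-((i:ℤ)+1)) (-((i:ℤ)+2)) (-1:ℤ) = -1 := sw1 (by omega) (by omega)
  have k2 : Equiv.swap ((i:ℤ)+1) ((i:ℤ)+2) (-1:ℤ) = -1 := sw1 (by omega) (by omega)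
  have k3 : Equiv.swap (-1:ℤ) (-2) (-1:ℤ) = -2 := swap_apply_left _ _
  have k4 : Equiv.swap (1:ℤ) 2 (-2:ℤ) = -2 := sw1 (by omega) (by omega)
  have k5 : Equiv.swap (1:ℤ) (-1) (-2:ℤ) = -2 := sw1 (by omega) (by omega)
  rw [expandG i (by omega), k1, k2, k3, k4, k5]

private lemma G4 : (a 0 * a i) (-2:ℤ) = 1 := by
  have h2 := hle hi
  have k1 : Equiv.swap (-((i:ℤ)+1)) (-((i:ℤ)+2)) (-2:ℤ) = -2 := sw1 (by omega) (by omega)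
  have k2 : Equiv.swap ((i:ℤ)+1) ((i:ℤ)+2) (-2:ℤ) = -2 := sw1 (by omega) (by omega)
  have k3 : Equiv.swap (-1:ℤ) (-2) (-2:ℤ) = -1 := swap_apply_right _ _
  have k4 : Equiv.swap (1:ℤ) 2 (-1:ℤ) = -1 := sw1 (by omega) (by omega)
  have k5 : Equiv.swap (1:ℤ) (-1) (-1:ℤ) = 1 := swap_apply_right _ _
  rw [expandG i (by omega), k1, k2, k3, k4, k5]

private lemma G5 : (a 0 * a i) ((i:ℤ)+1) = (i:ℤ)+2 := by
  have h2 := hle hi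
  have k1 : Equiv.swap (-((i:ℤ)+1)) (-((i:ℤ)+2)) ((i:ℤ)+1) = (i:ℤ)+1 := sw1 (by omega) (by omega)
  have k2 : Equiv.swap ((i:ℤ)+1) ((i:ℤ)+2) ((i:ℤ)+1) = (i:ℤ)+2 := swap_apply_left _ _
  have k3 : Equiv.swap (-1:ℤ) (-2) ((i:ℤ)+2) = (i:ℤ)+2 := sw1 (by omega) (by omega)
  have k4 : Equiv.swap (1:ℤ) 2 ((i:ℤ)+2) = (i:ℤ)+2 := sw1 (by omega) (by omega)
  have k5 : Equiv.swap (1:ℤ) (-1) ((i:ℤ)+2) = (i:ℤ)+2 := sw1 (by omega) (by omega)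
  rw [expandG i (by omega), k1, k2, k3, k4, k5]

private lemma G6 : (a 0 * a i) ((i:ℤ)+2) = (i:ℤ)+1 := by
  have h2 := hle hi
  have k1 : Equiv.swap (-((i:ℤ)+1)) (-((i:ℤ)+2)) ((i:ℤ)+2) = (i:ℤ)+2 := sw1 (by omega) (by omega)
  have k2 : Equiv.swap ((i:ℤ)+1) ((i:ℤ)+2) ((i:ℤ)+2) = (i:ℤ)+1 := swap_apply_right _ _
  have k3 : Equiv.swap (-1:ℤ) (-2) ((i:ℤ)+1) = (i:ℤ)+1 := sw1 (by omega) (by omega)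
  have k4 : Equiv.swap (1:ℤ) 2 ((i:ℤ)+1) = (i:ℤ)+1 := sw1 (by omega) (by omega)
  have k5 : Equiv.swap (1:ℤ) (-1) ((i:ℤ)+1) = (i:ℤ)+1 := sw1 (by omega) (by omega)
  rw [expandG i (by omega), k1, k2, k3, k4, k5]

private lemma G7 : (a 0 * a i) (-((i:ℤ)+1)) = -((i:ℤ)+2) := by
  have h2 := hle hi
  have k1 : Equiv.swap (-((i:ℤ)+1)) (-((i:ℤ)+2)) (-((i:ℤ)+1)) = -((i:ℤ)+2) := swap_apply_left _ _
  have k2 : Equiv.swap ((i:ℤ)+1) ((i:ℤ)+2) (-((i:ℤ)+2)) = -((i:ℤ)+2) := sw1 (by omega) (by omega)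
  have k3 : Equiv.swap (-1:ℤ) (-2) (-((i:ℤ)+2)) = -((i:ℤ)+2) := sw1 (by omega) (by omega)
  have k4 : Equiv.swap (1:ℤ) 2 (-((i:ℤ)+2)) = -((i:ℤ)+2) := sw1 (by omega) (by omega)
  have k5 : Equiv.swap (1:ℤ) (-1) (-((i:ℤ)+2)) = -((i:ℤ)+2) := sw1 (by omega) (by omega)
  rw [expandG i (by omega), k1, k2, k3, k4, k5]

private lemma G8 : (a 0 * a i) (-((i:ℤ)+2)) = -((i:ℤ)+1) := by
  have h2 := hle hi
  have k1 : Equiv.swap (-((i:ℤ)+1)) (-((i:ℤ)+2)) (-((i:ℤ)+2)) = -((i:ℤ)+1) := swap_apply_right _ _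
  have k2 : Equiv.swap ((i:ℤ)+1) ((i:ℤ)+2) (-((i:ℤ)+1)) = -((i:ℤ)+1) := sw1 (by omega) (by omega)
  have k3 : Equiv.swap (-1:ℤ) (-2) (-((i:ℤ)+1)) = -((i:ℤ)+1) := sw1 (by omega) (by omega)
  have k4 : Equiv.swap (1:ℤ) 2 (-((i:ℤ)+1)) = -((i:ℤ)+1) := sw1 (by omega) (by omega)
  have k5 : Equiv.swap (1:ℤ) (-1) (-((i:ℤ)+1)) = -((i:ℤ)+1) := sw1 (by omega) (by omega)
  rw [expandG i (by omega), k1, k2, k3, k4, k5]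

private lemma G0 (x : ℤ) (e1 : x ≠ 1) (e2 : x ≠ 2) (e3 : x ≠ -1) (e4 : x ≠ -2)
    (e5 : x ≠ (i:ℤ)+1) (e6 : x ≠ (i:ℤ)+2) (e7 : x ≠ -((i:ℤ)+1)) (e8 : x ≠ -((i:ℤ)+2)) :
    (a 0 * a i) x = x := by
  have k1 : Equiv.swap (-((i:ℤ)+1)) (-((i:ℤ)+2)) x = x := sw1 e7 e8
  have k2 : Equiv.swap ((i:ℤ)+1) ((i:ℤ)+2) x = x := sw1 e5 e6
  have k3 : Equiv.swap (-1:ℤ) (-2) x = x := sw1 e3 e4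
  have k4 : Equiv.swap (1:ℤ) 2 x = x := sw1 e1 e2
  have k5 : Equiv.swap (1:ℤ) (-1) x = x := sw1 e1 e3
  rw [expandG i (by omega), k1, k2, k3, k4, k5]

private lemma g_pow4 : (a 0 * a i) ^ 4 = 1 := by
  ext x
  simp only [Perm.one_apply]
  by_cases e1 : x = 1
  · subst e1; exact pow4_cycle _ _ _ _ _ (G1 hi) (G2 hi) (G3 hi) (G4 hi)
  by_cases e2 : x = 2
  · subst e2; exact pow4_cycle _ _ _ _ _ (G2 hi) (G3 hi) (G4 hi) (G1 hi)
  by_cases e3 : x = -1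
  · subst e3; exact pow4_cycle _ _ _ _ _ (G3 hi) (G4 hi) (G1 hi) (G2 hi)
  by_cases e4 : x = -2
  · subst e4; exact pow4_cycle _ _ _ _ _ (G4 hi) (G1 hi) (G2 hi) (G3 hi)
  by_cases e5 : x = (i:ℤ)+1
  · subst e5; exact pow4_cycle _ _ _ _ _ (G5 hi) (G6 hi) (G5 hi) (G6 hi)
  by_cases e6 : x = (i:ℤ)+2
  · subst e6; exact pow4_cycle _ _ _ _ _ (G6 hi) (G5 hi) (G6 hi) (G5 hi)
  by_cases e7 : x = -((i:ℤ)+1)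
  · subst e7; exact pow4_cycle _ _ _ _ _ (G7 hi) (G8 hi) (G7 hi) (G8 hi)
  by_cases e8 : x = -((i:ℤ)+2)
  · subst e8; exact pow4_cycle _ _ _ _ _ (G8 hi) (G7 hi) (G8 hi) (G7 hi)
  · exact Perm.pow_apply_eq_self_of_apply_eq_self (G0 hi x e1 e2 e3 e4 e5 e6 e7 e8) 4
end


private lemma rel2 : (a 0 * a 1) ^ 6 = 1 := by
  ext x
  simp only [Perm.one_apply]
  by_cases e1 : x = 1
  · subst e1
    exact pow6_cycle _ 1 2 3 (-1) (-2) (-3) (by decide) (by decide) (by decide) (by decide)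
      (by decide) (by decide)
  by_cases e2 : x = 2
  · subst e2
    exact pow6_cycle _ 2 3 (-1) (-2) (-3) 1 (by decide) (by decide) (by decide) (by decide)
      (by decide) (by decide)
  by_cases e3 : x = 3
  · subst e3
    exact pow6_cycle _ 3 (-1) (-2) (-3) 1 2 (by decide) (by decide) (by decide) (by decide)
      (by decide) (by decide)
  by_cases e4 : x = -1
  · subst e4
    exact pow6_cycle _ (-1) (-2) (-3) 1 2 3 (by decide) (by decide) (by decide) (by decide)
      (by decide) (by decide)
  by_cases e5 : x = -2
  · subst e5
    exact pow6_cycle _ (-2) (-3) 1 2 3 (-1) (by decide) (by decide) (by decide) (by decide)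
      (by decide) (by decide)
  by_cases e6 : x = -3
  · subst e6
    exact pow6_cycle _ (-3) 1 2 3 (-1) (-2) (by decide) (by decide) (by decide) (by decide)
      (by decide) (by decide)
  · refine Perm.pow_apply_eq_self_of_apply_eq_self ?_ 6
    simp [a, s, Perm.mul_apply, Equiv.swap_apply_def]
    split_ifs <;> omega

private lemma rel3 : (a 0 * (a 1)⁻¹) ^ 6 = 1 := by
  ext x
  simp only [Perm.one_apply]
  by_cases e1 : x = 1
  · subst e1
    exact pow6_cycle _ 1 3 2 (-1) (-3) (-2) (by decide) (by decide) (by decide) (by decide)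
      (by decide) (by decide)
  by_cases e2 : x = 2
  · subst e2
    exact pow6_cycle _ 2 (-1) (-3) (-2) 1 3 (by decide) (by decide) (by decide) (by decide)
      (by decide) (by decide)
  by_cases e3 : x = 3
  · subst e3
    exact pow6_cycle _ 3 2 (-1) (-3) (-2) 1 (by decide) (by decide) (by decide) (by decide)
      (by decide) (by decide)
  by_cases e4 : x = -1
  · subst e4
    exact pow6_cycle _ (-1) (-3) (-2) 1 3 2 (by decide) (by decide) (by decide) (by decide)
      (by decide) (by decide)
  by_cases e5 : x = -2
  · subst e5
    exact pow6_cycle _ (-2) 1 3 2 (-1) (-3) (by decide) (by decide) (by decide) (by decide)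
      (by decide) (by decide)
  by_cases e6 : x = -3
  · subst e6
    exact pow6_cycle _ (-3) (-2) 1 3 2 (-1) (by decide) (by decide) (by decide) (by decide)
      (by decide) (by decide)
  · refine Perm.pow_apply_eq_self_of_apply_eq_self ?_ 6
    simp [a, s, Perm.mul_apply, Equiv.swap_apply_def, mul_inv_rev]
    split_ifs <;> omega

/-- The generators `a₀, a₁, …, a_{n-1}` of `L_{n+1}` satisfy
`a₀² = 1`, `(a₀a₁)⁶ = 1`, `(a₀a₁⁻¹)⁶ = 1`, and `(a₀aᵢ)⁴ = 1` for `1 < i ≤ n-1`. -/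
theorem lGeneratorRelations (n : ℕ) :
    a 0 ^ 2 = 1 ∧ (a 0 * a 1) ^ 6 = 1 ∧ (a 0 * (a 1)⁻¹) ^ 6 = 1 ∧
      ∀ i : ℕ, 1 < i → i ≤ n - 1 → (a 0 * a i) ^ 4 = 1 := by
  refine ⟨?_, rel2, rel3, fun i hi _ => g_pow4 hi⟩
  rw [pow_two]
  simp [a, s]
end SignedEven
end

section
/- There exists an involution phi of B_n such that for every sigma in B_n, maj_B(sigma) = rmaj_{B_n}(phi(sigma)) and Neg(sigma^{-1}) = Neg(phi(sigma)^{-1}). Consequently, maj_B and rmaj_{B_n} are equidistributed on B_n. -/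
open Equiv Finset

namespace SignedEven

/-- reversal function -/
def revf (n : ℕ) (v : ℤ) : ℤ :=
  if 1 ≤ v ∧ v ≤ (n : ℤ) then (n : ℤ) + 1 - v
  else if -(n : ℤ) ≤ v ∧ v ≤ -1 then -(n : ℤ) - 1 - v else v

lemma revf_involutive (n : ℕ) : Function.Involutive (revf n) := by
  intro v; unfold revf; split_ifs <;> omega

lemma revf_neg (n : ℕ) (v : ℤ) : revf n (-v) = - revf n v := by
  unfold revf; split_ifs <;> omega

lemma revf_eval (n : ℕ) (v : ℤ) (h1 : 1 ≤ v) (h2 : v ≤ n) :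
    revf n v = (n : ℤ) + 1 - v := by
  unfold revf; split_ifs <;> omega

lemma revf_fix (n : ℕ) (v : ℤ) (h : (n : ℤ) < v ∨ v < -(n : ℤ)) : revf n v = v := by
  unfold revf; split_ifs <;> omega

noncomputable def gf (n : ℕ) (T : Finset ℤ) (v : ℤ) : ℤ :=
  if h : T.card = n ∧ ∀ t ∈ T, -t ∉ T then
    if hv : v ∈ T then ((T.orderIsoOfFin h.1) ((T.orderIsoOfFin h.1).symm ⟨v, hv⟩).rev : ℤ)
    else if hv' : -v ∈ T then
      -((T.orderIsoOfFin h.1) ((T.orderIsoOfFin h.1).symm ⟨-v, hv'⟩).rev : ℤ)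
    else v
  else v

section gfprops
variable {n : ℕ} {T : Finset ℤ}

lemma gf_apply_mem (H : T.card = n ∧ ∀ t ∈ T, -t ∉ T) {v : ℤ} (hv : v ∈ T) :
    gf n T v = ((T.orderIsoOfFin H.1) ((T.orderIsoOfFin H.1).symm ⟨v, hv⟩).rev : ℤ) := by
  rw [gf, dif_pos H, dif_pos hv]

lemma gf_mem (H : T.card = n ∧ ∀ t ∈ T, -t ∉ T) {v : ℤ} (hv : v ∈ T) : gf n T v ∈ T := by
  rw [gf_apply_mem H hv]; exact Finset.coe_mem _

lemma gf_anti (H : T.card = n ∧ ∀ t ∈ T, -t ∉ T) {a b : ℤ} (ha : a ∈ T) (hb : b ∈ T) (hab : a < b) :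
    gf n T b < gf n T a := by
  rw [gf_apply_mem H ha, gf_apply_mem H hb]
  have : ((T.orderIsoOfFin H.1).symm ⟨a, ha⟩) < ((T.orderIsoOfFin H.1).symm ⟨b, hb⟩) := by
    rw [OrderIso.lt_iff_lt]; exact hab
  have h2 : ((T.orderIsoOfFin H.1).symm ⟨b, hb⟩).rev < ((T.orderIsoOfFin H.1).symm ⟨a, ha⟩).rev := by
    rw [Fin.rev_lt_rev]; exact this
  exact_mod_cast (T.orderIsoOfFin H.1).lt_iff_lt.mpr h2

lemma gf_fixed' {v : ℤ} (hv : v ∉ T) (hv' : -v ∉ T) : gf n T v = v := by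
  rw [gf]
  by_cases H : T.card = n ∧ ∀ t ∈ T, -t ∉ T
  · rw [dif_pos H, dif_neg hv, dif_neg hv']
  · rw [dif_neg H]

lemma gf_neg (v : ℤ) : gf n T (-v) = - gf n T v := by
  by_cases H : T.card = n ∧ ∀ t ∈ T, -t ∉ T
  · by_cases hv : v ∈ T
    · have hnv : -v ∉ T := H.2 v hv
      have hnnv : -(-v) ∈ T := by simpa using hv
      rw [gf, dif_pos H, dif_neg hnv, dif_pos hnnv, gf_apply_mem H hv,
        show (⟨- -v, hnnv⟩ : {x // x ∈ T}) = ⟨v, hv⟩ from Subtype.ext (neg_neg v)]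
    · by_cases hnv : -v ∈ T
      · rw [gf_apply_mem H hnv, gf]
        rw [dif_pos H, dif_neg hv, dif_pos hnv]
        simp
      · rw [gf_fixed' hv hnv, gf_fixed' hnv (by simpa using hv)]
  · simp only [gf, dif_neg H]

lemma gf_inv_mem (H : T.card = n ∧ ∀ t ∈ T, -t ∉ T) {v : ℤ} (hv : v ∈ T) :
    gf n T (gf n T v) = v := by
  have h1 : gf n T v ∈ T := gf_mem H hv
  rw [gf_apply_mem H h1,
    show (⟨gf n T v, h1⟩ : {x // x ∈ T})
      = (T.orderIsoOfFin H.1) ((T.orderIsoOfFin H.1).symm ⟨v, hv⟩).rev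
      from Subtype.ext (gf_apply_mem H hv),
    OrderIso.symm_apply_apply, Fin.rev_rev, OrderIso.apply_symm_apply]

lemma gf_involutive : Function.Involutive (gf n T) := by
  intro v
  by_cases H : T.card = n ∧ ∀ t ∈ T, -t ∉ T
  · by_cases hv : v ∈ T
    · exact gf_inv_mem H hv
    · by_cases hnv : -v ∈ T
      · calc gf n T (gf n T v) = gf n T (gf n T (-(-v))) := by rw [neg_neg]
        _ = -gf n T (gf n T (-v)) := by rw [gf_neg, gf_neg]
        _ = -(-v) := by rw [gf_inv_mem H hnv]
        _ = v := neg_neg v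
      · rw [gf_fixed' hv hnv, gf_fixed' hv hnv]
  · simp only [gf, dif_neg H]

lemma gf_anti_iff (H : T.card = n ∧ ∀ t ∈ T, -t ∉ T) {a b : ℤ} (ha : a ∈ T) (hb : b ∈ T) :
    gf n T b < gf n T a ↔ a < b := by
  constructor
  · intro h
    rcases lt_trichotomy a b with h' | h' | h'
    · exact h'
    · subst h'; exact absurd h (lt_irrefl _)
    · exact absurd (gf_anti H hb ha h') (not_lt.mpr h.le)
  · exact gf_anti H ha hb

end gfprops

noncomputable def gPerm (n : ℕ) (T : Finset ℤ) : Perm ℤ :=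
  Function.Involutive.toPerm _ (gf_involutive (n := n) (T := T))

noncomputable def revPerm (n : ℕ) : Perm ℤ :=
  Function.Involutive.toPerm _ (revf_involutive n)

noncomputable def Tset (n : ℕ) (σ : Perm ℤ) : Finset ℤ := (Finset.Icc (1 : ℤ) (n : ℤ)).image σ

open scoped Classical in
noncomputable def phi (n : ℕ) (σ : Perm ℤ) : Perm ℤ :=
  if isB n σ then gPerm n (Tset n σ) * σ * revPerm n else σ

section sigma
variable {n : ℕ} {σ : Perm ℤ}

lemma sigma_zero (hσ : isB n σ) : σ 0 = 0 := by
  have h := hσ.1 0; rw [neg_zero] at h; omega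

lemma sigma_abs_le (hσ : isB n σ) {i : ℤ} (h0 : i ≠ 0) (hn : |i| ≤ (n : ℤ)) :
    σ i ≠ 0 ∧ |σ i| ≤ (n : ℤ) := by
  constructor
  · intro h
    exact h0 (σ.injective (by rw [h, sigma_zero hσ]))
  · by_contra h
    push_neg at h
    have h2 := hσ.2 (σ i) h
    have h3 : σ i = i := σ.injective h2
    rw [h3] at h; linarith

lemma isB_inv (hσ : isB n σ) : isB n σ⁻¹ := by
  constructor
  · intro i
    apply σ.injective
    have h1 : σ (-σ⁻¹ i) = -i := by
      rw [hσ.1, ← Perm.mul_apply, mul_inv_cancel, Perm.one_apply]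
    rw [← Perm.mul_apply, mul_inv_cancel, Perm.one_apply, h1]
  · intro i hi
    have h := hσ.2 i hi
    rw [Equiv.Perm.inv_def, Equiv.symm_apply_eq]
    exact h.symm

lemma Tcard (n : ℕ) (σ : Perm ℤ) : (Tset n σ).card = n := by
  rw [Tset, Finset.card_image_of_injective _ σ.injective, Int.card_Icc]
  omega

lemma mem_T_bounds (hσ : isB n σ) {t : ℤ} (ht : t ∈ Tset n σ) :
    (1 ≤ t ∧ t ≤ (n : ℤ)) ∨ (-(n : ℤ) ≤ t ∧ t ≤ -1) := by
  obtain ⟨i, hi, rfl⟩ := Finset.mem_image.mp ht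
  rw [Finset.mem_Icc] at hi
  have h := sigma_abs_le (i := i) hσ (by omega) (by rw [abs_le]; omega)
  rcases abs_le.mp h.2 with ⟨h1, h2⟩
  rcases h with ⟨h3, _⟩
  omega

lemma Tdisj (hσ : isB n σ) : ∀ t ∈ Tset n σ, -t ∉ Tset n σ := by
  intro t ht hnt
  obtain ⟨i, hi, hit⟩ := Finset.mem_image.mp ht
  obtain ⟨j, hj, hjt⟩ := Finset.mem_image.mp hnt
  rw [Finset.mem_Icc] at hi hj
  have h1 : σ j = σ (-i) := by rw [hσ.1, hit, hjt]
  have h2 : j = -i := σ.injective h1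
  omega

lemma TH (hσ : isB n σ) : (Tset n σ).card = n ∧ ∀ t ∈ Tset n σ, -t ∉ Tset n σ :=
  ⟨Tcard n σ, Tdisj hσ⟩

lemma phi_eq (hσ : isB n σ) : phi n σ = gPerm n (Tset n σ) * σ * revPerm n :=
  if_pos hσ

lemma phi_app (hσ : isB n σ) (v : ℤ) :
    phi n σ v = gf n (Tset n σ) (σ (revf n v)) := by
  rw [phi_eq hσ]; rfl

lemma isB_phi (hσ : isB n σ) : isB n (phi n σ) := by
  constructor
  · intro v
    rw [phi_app hσ, phi_app hσ, revf_neg, hσ.1, gf_neg]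
  · intro v hv
    rcases lt_abs.mp hv with h | h
    all_goals {
      rw [phi_app hσ, revf_fix n v (by omega), hσ.2 v hv]
      refine gf_fixed' (fun hm => ?_) (fun hm => ?_)
      · rcases mem_T_bounds hσ hm with h' | h' <;> omega
      · rcases mem_T_bounds hσ hm with h' | h' <;> omega
    }

lemma image_phi (hσ : isB n σ) : Tset n (phi n σ) = Tset n σ := by
  apply Finset.Subset.antisymm
  · intro t ht
    obtain ⟨i, hi, rfl⟩ := Finset.mem_image.mp ht
    rw [Finset.mem_Icc] at hi
    rw [phi_app hσ, revf_eval n i hi.1 hi.2]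
    exact gf_mem (TH hσ) (Finset.mem_image_of_mem σ (Finset.mem_Icc.mpr (by omega)))
  · intro t ht
    have hgt : gf n (Tset n σ) t ∈ Tset n σ := gf_mem (TH hσ) ht
    obtain ⟨j, hj, hjt⟩ := Finset.mem_image.mp hgt
    rw [Finset.mem_Icc] at hj
    refine Finset.mem_image.mpr ⟨(n : ℤ) + 1 - j, Finset.mem_Icc.mpr (by omega), ?_⟩
    rw [phi_app hσ, revf_eval n _ (by omega) (by omega),
      show (n : ℤ) + 1 - ((n : ℤ) + 1 - j) = j by ring, hjt, gf_involutive t]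

lemma negSet_char (hσ : isB n σ) :
    negSet n σ⁻¹ = (Finset.Icc (1 : ℤ) (n : ℤ)).filter (fun i => -i ∈ Tset n σ) := by
  ext i
  simp only [negSet, Finset.mem_filter, Finset.mem_Icc]
  constructor
  · rintro ⟨⟨h1, h2⟩, hneg⟩
    refine ⟨⟨h1, h2⟩, ?_⟩
    have hb := sigma_abs_le (i := i) (isB_inv hσ) (by omega) (by rw [abs_le]; omega)
    rcases abs_le.mp hb.2 with ⟨hb1, hb2⟩
    refine Finset.mem_image.mpr ⟨-(σ⁻¹ i), Finset.mem_Icc.mpr (by omega), ?_⟩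
    rw [hσ.1, ← Perm.mul_apply, mul_inv_cancel, Perm.one_apply]
  · rintro ⟨⟨h1, h2⟩, hm⟩
    obtain ⟨k, hk, hk2⟩ := Finset.mem_image.mp hm
    rw [Finset.mem_Icc] at hk
    have h3 : σ (-k) = i := by rw [hσ.1, hk2, neg_neg]
    have h4 : σ⁻¹ i = -k := by rw [← h3, ← Perm.mul_apply, inv_mul_cancel, Perm.one_apply]
    exact ⟨⟨h1, h2⟩, by omega⟩

lemma negSet_phi (hσ : isB n σ) : negSet n σ⁻¹ = negSet n (phi n σ)⁻¹ := by
  rw [negSet_char hσ, negSet_char (isB_phi hσ), image_phi hσ]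

lemma phi_desc_iff (hσ : isB n σ) {i : ℕ} (h1 : 1 ≤ i) (h2 : i ≤ n - 1) :
    (phi n σ ((i : ℤ) + 1) < phi n σ (i : ℤ)) ↔
      (σ (((n - i : ℕ) : ℤ) + 1) < σ ((n - i : ℕ) : ℤ)) := by
  have hn : 2 ≤ n := by omega
  have e1 : revf n (i : ℤ) = (n : ℤ) + 1 - i := revf_eval n _ (by omega) (by omega)
  have e2 : revf n ((i : ℤ) + 1) = (n : ℤ) - i := by
    rw [revf_eval n _ (by omega) (by omega)]; ring
  have ha : σ ((n : ℤ) + 1 - i) ∈ Tset n σ :=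
    Finset.mem_image_of_mem σ (Finset.mem_Icc.mpr (by omega))
  have hb : σ ((n : ℤ) - i) ∈ Tset n σ :=
    Finset.mem_image_of_mem σ (Finset.mem_Icc.mpr (by omega))
  rw [phi_app hσ, phi_app hσ, e1, e2, gf_anti_iff (TH hσ) ha hb,
    show ((n - i : ℕ) : ℤ) = (n : ℤ) - i by omega,
    show (n : ℤ) - i + 1 = (n : ℤ) + 1 - i by ring]

lemma desSSet_phi (hσ : isB n σ) :
    desSSet n (phi n σ) = (desSSet n σ).image (fun j => n - j) := by
  ext i
  simp only [desSSet, Finset.mem_image, Finset.mem_filter, Finset.mem_Icc]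
  constructor
  · rintro ⟨⟨hi1, hi2⟩, hd⟩
    refine ⟨n - i, ⟨⟨by omega, by omega⟩, ?_⟩, by omega⟩
    exact (phi_desc_iff hσ hi1 hi2).mp hd
  · rintro ⟨j, ⟨⟨hj1, hj2⟩, hd⟩, rfl⟩
    refine ⟨⟨by omega, by omega⟩, ?_⟩
    have := (phi_desc_iff hσ (i := n - j) (by omega) (by omega)).mpr
    rw [show n - (n - j) = j from by omega] at this
    exact this hd

lemma maj_rmaj (hσ : isB n σ) : majB n σ = rmajB n (phi n σ) := by
  rw [rmajB, desSSet_phi hσ, Finset.sum_image ?_]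
  · refine Finset.sum_congr rfl fun j hj => ?_
    rw [desSSet, Finset.mem_filter, Finset.mem_Icc] at hj
    omega
  · intro x hx y hy hxy
    rw [Finset.mem_coe, desSSet, Finset.mem_filter, Finset.mem_Icc] at hx hy
    simp only at hxy
    omega

lemma phi_phi (hσ : isB n σ) : phi n (phi n σ) = σ := by
  rw [phi_eq (isB_phi hσ), image_phi hσ, phi_eq hσ]
  ext v
  simp only [Perm.mul_apply]
  show gf n (Tset n σ) (gf n (Tset n σ) (σ (revf n (revf n v)))) = σ v
  rw [revf_involutive n v, gf_involutive]

end sigma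

/-- There is an involution `φ` of `B_n` with
`maj_B(σ) = rmaj_{B_n}(φ(σ))` and `Neg(σ⁻¹) = Neg(φ(σ)⁻¹)`; consequently `maj_B` and
`rmaj_{B_n}` are equidistributed on `B_n`. -/
theorem majRmajEquidistributed (n : ℕ) :
    (∃ φ : Equiv.Perm ℤ → Equiv.Perm ℤ,
      ∀ σ : Equiv.Perm ℤ, isB n σ →
        isB n (φ σ) ∧ φ (φ σ) = σ ∧ majB n σ = rmajB n (φ σ) ∧
          negSet n σ⁻¹ = negSet n (φ σ)⁻¹) ∧
    ∀ q : ℚ, ∑ᶠ σ ∈ {σ : Equiv.Perm ℤ | isB n σ}, q ^ majB n σ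
      = ∑ᶠ σ ∈ {σ : Equiv.Perm ℤ | isB n σ}, q ^ rmajB n σ := by
  constructor
  · exact ⟨phi n, fun σ hσ => ⟨isB_phi hσ, phi_phi hσ, maj_rmaj hσ, negSet_phi hσ⟩⟩
  · intro q
    refine finsum_mem_eq_of_bijOn (phi n)
      ⟨fun σ hσ => isB_phi hσ, fun σ₁ h₁ σ₂ h₂ h => ?_, fun σ hσ => ?_⟩
      (fun σ hσ => by rw [maj_rmaj hσ])
    · rw [← phi_phi h₁, h, phi_phi h₂]
    · exact ⟨phi n σ, isB_phi hσ, phi_phi hσ⟩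
end SignedEven
end

section
/- For every permutation rho in S_{n+1} (viewed inside B_{n+1}), ell_L(rho) = ell_L(s_1 rho), where ell_L(sigma) = inv(sigma) - del_B(sigma) + sum of Neg(sigma^{-1}). -/
open Equiv Finset

namespace SignedEven

lemma s1_apply (x : ℤ) :
    s 1 x = if x = 1 then 2 else if x = 2 then 1 else if x = -1 then -2
      else if x = -2 then -1 else x := by
  have h1 : (1 : ℕ) ≠ 0 := one_ne_zero
  simp only [s, if_neg h1, Nat.cast_one, Equiv.Perm.mul_apply, Equiv.swap_apply_def]
  norm_num
  split_ifs <;> first | omega | tauto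

lemma s1_odd (x : ℤ) : s 1 (-x) = -s 1 x := by
  rw [s1_apply, s1_apply]; split_ifs <;> omega

lemma s1_pos {x : ℤ} (hx : 0 < x) : 0 < s 1 x := by
  rw [s1_apply]; split_ifs <;> omega

lemma s1_sq : s 1 * s 1 = 1 := by
  ext x
  simp only [Equiv.Perm.mul_apply, Equiv.Perm.one_apply]
  rw [s1_apply, s1_apply]
  split_ifs <;> first | omega | tauto

lemma pos_inv {σ : Equiv.Perm ℤ} (hodd : ∀ i : ℤ, σ (-i) = -σ i)
    (hpos : ∀ i : ℤ, 0 < i → 0 < σ i) {x : ℤ} (hx : 0 < σ x) : 0 < x := by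
  rcases lt_trichotomy x 0 with h | rfl | h
  · have h1 : σ (-(-x)) = -σ (-x) := hodd (-x)
    have h2 : 0 < σ (-x) := hpos _ (by omega)
    rw [neg_neg] at h1
    omega
  · have h0 := hodd 0
    rw [neg_zero] at h0
    omega
  · exact h

lemma negSum_zero (m : ℕ) (σ : Equiv.Perm ℤ) (hodd : ∀ i : ℤ, σ (-i) = -σ i)
    (hpos : ∀ i : ℤ, 0 < i → 0 < σ i) : negSum m σ⁻¹ = 0 := by
  rw [negSum, negSet, Finset.filter_false_of_mem, Finset.sum_empty]
  intro i hi
  simp only [not_lt]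
  have hmem := Finset.mem_Icc.mp hi
  have hpi : 0 < σ (σ⁻¹ i) := by rw [Equiv.Perm.coe_inv, Equiv.apply_symm_apply]; omega
  exact le_of_lt (pos_inv hodd hpos hpi)

lemma inv_key (m : ℕ) (σ : Equiv.Perm ℤ)
    (hpos : ∀ i : ℤ, 0 < i → 0 < σ i) (p q : ℤ)
    (hp : p ∈ Finset.Icc (1 : ℤ) (m : ℤ)) (hq : q ∈ Finset.Icc (1 : ℤ) (m : ℤ))
    (hσp : σ p = 1) (hσq : σ q = 2) (hpq : p < q) :
    invStat m (s 1 * σ) = invStat m σ + 1 := by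
  have hch1 : ∀ x : ℤ, σ x = 1 ↔ x = p := fun x =>
    ⟨fun h => σ.injective (by rw [h, hσp]), fun h => h ▸ hσp⟩
  have hch2 : ∀ x : ℤ, σ x = 2 ↔ x = q := fun x =>
    ⟨fun h => σ.injective (by rw [h, hσq]), fun h => h ▸ hσq⟩
  have hp' := Finset.mem_Icc.mp hp
  have hq' := Finset.mem_Icc.mp hq
  have hnot : (p, q) ∉ ((Finset.Icc (1 : ℤ) (m : ℤ)) ×ˢ (Finset.Icc (1 : ℤ) (m : ℤ))).filter
      (fun pr => pr.1 < pr.2 ∧ σ pr.2 < σ pr.1) := by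
    simp only [Finset.mem_filter, hσp, hσq, not_and]
    intro _ _
    omega
  have hset : (((Finset.Icc (1 : ℤ) (m : ℤ)) ×ˢ (Finset.Icc (1 : ℤ) (m : ℤ))).filter
      (fun pr => pr.1 < pr.2 ∧ (s 1 * σ) pr.2 < (s 1 * σ) pr.1)) =
      insert (p, q) (((Finset.Icc (1 : ℤ) (m : ℤ)) ×ˢ (Finset.Icc (1 : ℤ) (m : ℤ))).filter
      (fun pr => pr.1 < pr.2 ∧ σ pr.2 < σ pr.1)) := by
    ext ⟨i, j⟩
    have hi1 := hch1 i
    have hi2 := hch2 i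
    have hj1 := hch1 j
    have hj2 := hch2 j
    have hpi : 1 ≤ i → 0 < σ i := fun h => hpos i (by omega)
    have hpj : 1 ≤ j → 0 < σ j := fun h => hpos j (by omega)
    simp only [Finset.mem_insert, Finset.mem_filter, Finset.mem_product, Finset.mem_Icc,
      Prod.mk.injEq, Equiv.Perm.mul_apply, s1_apply]
    split_ifs <;> omega
  rw [invStat, invStat, hset, Finset.card_insert_of_notMem hnot]

lemma del_key (m : ℕ) (σ : Equiv.Perm ℤ)
    (hpos : ∀ i : ℤ, 0 < i → 0 < σ i) (p q : ℤ)
    (hp : p ∈ Finset.Icc (1 : ℤ) (m : ℤ)) (hq : q ∈ Finset.Icc (1 : ℤ) (m : ℤ))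
    (hσp : σ p = 1) (hσq : σ q = 2) (hpq : p < q) :
    delB m (s 1 * σ) = delB m σ + 1 := by
  have hch1 : ∀ x : ℤ, σ x = 1 ↔ x = p := fun x =>
    ⟨fun h => σ.injective (by rw [h, hσp]), fun h => h ▸ hσp⟩
  have hch2 : ∀ x : ℤ, σ x = 2 ↔ x = q := fun x =>
    ⟨fun h => σ.injective (by rw [h, hσq]), fun h => h ▸ hσq⟩
  have hp' := Finset.mem_Icc.mp hp
  have hq' := Finset.mem_Icc.mp hq
  have hnot : q ∉ (Finset.Icc (2 : ℤ) (m : ℤ)).filter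
      (fun j => ∀ i ∈ Finset.Icc (1 : ℤ) (m : ℤ), i < j → σ j < σ i) := by
    simp only [Finset.mem_filter, not_and]
    intro _ hmin
    have hc := hmin p hp hpq
    rw [hσp, hσq] at hc
    omega
  have hset : (Finset.Icc (2 : ℤ) (m : ℤ)).filter
      (fun j => ∀ i ∈ Finset.Icc (1 : ℤ) (m : ℤ), i < j → (s 1 * σ) j < (s 1 * σ) i) =
      insert q ((Finset.Icc (2 : ℤ) (m : ℤ)).filter
      (fun j => ∀ i ∈ Finset.Icc (1 : ℤ) (m : ℤ), i < j → σ j < σ i)) := by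
    ext j
    simp only [Finset.mem_insert, Finset.mem_filter, Finset.mem_Icc]; simp only [Equiv.Perm.mul_apply]
    constructor
    · rintro ⟨hjb, hmin⟩
      by_cases hjq : j = q
      · exact Or.inl hjq
      · refine Or.inr ⟨hjb, fun i hi hij => ?_⟩
        have h' := hmin i hi hij
        have hi1 := hch1 i
        have hi2 := hch2 i
        have hj1 := hch1 j
        have hj2 := hch2 j
        have hpi : 0 < σ i := hpos i (by omega)
        have hpj : 0 < σ j := hpos j (by omega)
        rw [s1_apply, s1_apply] at h'
        split_ifs at h' <;> omega
    · rintro (rfl | ⟨hjb, hmin⟩)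
      · refine ⟨⟨by omega, hq'.2⟩, fun i hi hij => ?_⟩
        have hi2 := hch2 i
        have hpi : 0 < σ i := hpos i (by omega)
        rw [s1_apply, s1_apply, hσq]
        split_ifs <;> omega
      · refine ⟨hjb, fun i hi hij => ?_⟩
        have h' := hmin i hi hij
        have hi1 := hch1 i
        have hi2 := hch2 i
        have hj1 := hch1 j
        have hj2 := hch2 j
        have hpi : 0 < σ i := hpos i (by omega)
        have hpj : 0 < σ j := hpos j (by omega)
        rw [s1_apply, s1_apply]
        split_ifs <;> omega
  rw [delB, delB, hset, Finset.card_insert_of_notMem hnot]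

lemma key (m : ℕ) (σ : Equiv.Perm ℤ) (hodd : ∀ i : ℤ, σ (-i) = -σ i)
    (hpos : ∀ i : ℤ, 0 < i → 0 < σ i) (p q : ℤ)
    (hp : p ∈ Finset.Icc (1 : ℤ) (m : ℤ)) (hq : q ∈ Finset.Icc (1 : ℤ) (m : ℤ))
    (hσp : σ p = 1) (hσq : σ q = 2) (hpq : p < q) :
    ellL m σ = ellL m (s 1 * σ) := by
  have hodd' : ∀ i : ℤ, (s 1 * σ) (-i) = -((s 1 * σ) i) := fun i => by
    rw [Equiv.Perm.mul_apply, Equiv.Perm.mul_apply, hodd, s1_odd]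
  have hpos' : ∀ i : ℤ, 0 < i → 0 < (s 1 * σ) i := fun i hi => by
    rw [Equiv.Perm.mul_apply]; exact s1_pos (hpos i hi)
  rw [ellL, ellL, inv_key m σ hpos p q hp hq hσp hσq hpq,
      del_key m σ hpos p q hp hq hσp hσq hpq,
      negSum_zero m σ hodd hpos, negSum_zero m _ hodd' hpos']
  push_cast
  ring

/-- For every `ρ ∈ S_{n+1} ⊆ B_{n+1}`, `ℓ_L(ρ) = ℓ_L(s₁ρ)`. -/
theorem ellLLeftMulS1 (n : ℕ) (ρ : Equiv.Perm ℤ) (hρ : isS (n + 1) ρ) :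
    ellL (n + 1) ρ = ellL (n + 1) (s 1 * ρ) := by
  obtain ⟨⟨hodd, hfix⟩, hpos⟩ := hρ
  have hodd' : ∀ i : ℤ, (s 1 * ρ) (-i) = -((s 1 * ρ) i) := fun i => by
    rw [Equiv.Perm.mul_apply, Equiv.Perm.mul_apply, hodd, s1_odd]
  have hpos' : ∀ i : ℤ, 0 < i → 0 < (s 1 * ρ) i := fun i hi => by
    rw [Equiv.Perm.mul_apply]; exact s1_pos (hpos i hi)
  rcases Nat.eq_zero_or_pos n with rfl | hn
  · have hinv : ∀ τ : Equiv.Perm ℤ, invStat (0 + 1) τ = 0 := by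
      intro τ
      rw [invStat, Finset.card_eq_zero, Finset.filter_eq_empty_iff]
      intro x hx
      simp only [Finset.mem_product, Finset.mem_Icc] at hx
      norm_num at hx
      intro h
      omega
    have hdel : ∀ τ : Equiv.Perm ℤ, delB (0 + 1) τ = 0 := by
      intro τ
      rw [delB]
      have he : Finset.Icc (2 : ℤ) ((0 + 1 : ℕ) : ℤ) = ∅ := by
        apply Finset.Icc_eq_empty
        norm_num
      rw [he, Finset.filter_empty, Finset.card_empty]
    rw [ellL, ellL, hinv ρ, hinv _, hdel ρ, hdel _,
      negSum_zero _ ρ hodd hpos, negSum_zero _ _ hodd' hpos']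
  · set p := ρ⁻¹ 1 with hpdef
    set q := ρ⁻¹ 2 with hqdef
    have hρp : ρ p = 1 := Equiv.apply_symm_apply ρ 1
    have hρq : ρ q = 2 := Equiv.apply_symm_apply ρ 2
    have hppos : 0 < p := pos_inv hodd hpos (by rw [hρp]; norm_num)
    have hqpos : 0 < q := pos_inv hodd hpos (by rw [hρq]; norm_num)
    have hpm : p ≤ (n : ℤ) + 1 := by
      by_contra h
      have hfp : ρ p = p := hfix p (by rw [abs_of_pos hppos]; push_cast; omega)
      omega
    have hqm : q ≤ (n : ℤ) + 1 := by
      by_contra h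
      have hfq : ρ q = q := hfix q (by rw [abs_of_pos hqpos]; push_cast; omega)
      omega
    have hp : p ∈ Finset.Icc (1 : ℤ) (((n + 1 : ℕ)) : ℤ) := by
      rw [Finset.mem_Icc]; push_cast; omega
    have hq : q ∈ Finset.Icc (1 : ℤ) (((n + 1 : ℕ)) : ℤ) := by
      rw [Finset.mem_Icc]; push_cast; omega
    have hne : p ≠ q := by
      intro h
      rw [h] at hρp
      omega
    rcases lt_or_gt_of_ne hne with hlt | hgt
    · exact key (n + 1) ρ hodd hpos p q hp hq hρp hρq hlt
    · have hq1 : (s 1 * ρ) q = 1 := by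
        rw [Equiv.Perm.mul_apply, hρq, s1_apply]
        norm_num
      have hp2 : (s 1 * ρ) p = 2 := by
        rw [Equiv.Perm.mul_apply, hρp, s1_apply]
        norm_num
      have h2 := key (n + 1) (s 1 * ρ) hodd' hpos' q p hq hp hq1 hp2 hgt
      rw [← mul_assoc, s1_sq, one_mul] at h2
      exact h2.symm
end SignedEven
end

section
/- Let sigma' in B_{n+1} be a signed permutation whose window [sigma'(1),...,sigma'(n+1)] is strictly increasing. Then for every v in S_{n+1}: inv(sigma' v) = inv(v), del_B(sigma' v) = del_S(v), Neg((sigma' v)^{-1}) = Neg(sigma'^{-1}), and consequently ell_L(sigma' v) = ell_L(sigma') + ell_L(v). -/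
open Equiv Finset

namespace SignedEven

theorem _root_.Equiv.Perm.apply_inv_self (f : Equiv.Perm ℤ) (x : ℤ) : f (f⁻¹ x) = x :=
  Equiv.apply_symm_apply f x

/-- If `σ' ∈ B_{n+1}` has a strictly increasing window, then for every
`v ∈ S_{n+1}`: `inv(σ'v) = inv(v)`, `del_B(σ'v) = del_S(v)`,
`Neg((σ'v)⁻¹) = Neg(σ'⁻¹)`, and `ℓ_L(σ'v) = ℓ_L(σ') + ℓ_L(v)`. -/
theorem increasingWindowMul (n : ℕ) (σ' v : Equiv.Perm ℤ) (hσ' : isB (n + 1) σ')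
    (hinc : ∀ i j : ℤ, 1 ≤ i → i < j → j ≤ (n : ℤ) + 1 → σ' i < σ' j)
    (hv : isS (n + 1) v) :
    invStat (n + 1) (σ' * v) = invStat (n + 1) v ∧
    delB (n + 1) (σ' * v) = delB (n + 1) v ∧
    negSet (n + 1) (σ' * v)⁻¹ = negSet (n + 1) σ'⁻¹ ∧
    ellL (n + 1) (σ' * v) = ellL (n + 1) σ' + ellL (n + 1) v := by
  obtain ⟨hvB, hvpos⟩ := hv
  have hNcast : ((n + 1 : ℕ) : ℤ) = (n : ℤ) + 1 := by push_cast; ring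
  have hv0 : v 0 = 0 := by
    have h := hvB.1 0
    simp only [neg_zero] at h
    linarith
  have hσ'0 : σ' 0 = 0 := by
    have h := hσ'.1 0
    simp only [neg_zero] at h
    linarith
  have hvipos : ∀ x : ℤ, 0 < x → 0 < v⁻¹ x := by
    intro x hx
    rcases lt_trichotomy (v⁻¹ x) 0 with h | h | h
    · have h1 : 0 < v (-(v⁻¹ x)) := hvpos _ (by linarith)
      have h2 : v (-(v⁻¹ x)) = -v (v⁻¹ x) := hvB.1 _
      rw [Equiv.Perm.apply_inv_self] at h2
      linarith
    · have : v (v⁻¹ x) = 0 := by rw [h, hv0]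
      rw [Equiv.Perm.apply_inv_self] at this; linarith
    · exact h
  have hvi0 : v⁻¹ 0 = 0 := by
    apply v.injective
    rw [Equiv.Perm.apply_inv_self, hv0]
  have hviff : ∀ y : ℤ, v⁻¹ y < 0 ↔ y < 0 := by
    intro y
    constructor
    · intro h
      rcases lt_trichotomy y 0 with hy | hy | hy
      · exact hy
      · rw [hy, hvi0] at h; exact absurd h (lt_irrefl 0)
      · exact absurd (hvipos y hy) (by linarith)
    · intro hy
      have h1 : v (-(v⁻¹ y)) = -y := by
        rw [hvB.1, Equiv.Perm.apply_inv_self]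
      have h2 : v⁻¹ (-y) = -(v⁻¹ y) := by
        apply v.injective
        rw [Equiv.Perm.apply_inv_self, h1]
      have := hvipos (-y) (by linarith)
      rw [h2] at this; linarith
  have hvmem : ∀ i : ℤ, i ∈ Finset.Icc (1 : ℤ) ((n + 1 : ℕ) : ℤ) →
      v i ∈ Finset.Icc (1 : ℤ) ((n + 1 : ℕ) : ℤ) := by
    intro i hi
    rw [Finset.mem_Icc] at hi ⊢
    constructor
    · have := hvpos i (by linarith); linarith
    · by_contra h
      push_neg at h
      have hfix : v (v i) = v i := by
        apply hvB.2 (v i)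
        rw [abs_of_pos (hvpos i (by linarith))]
        linarith
      have := v.injective hfix
      linarith
  have key : ∀ a b : ℤ, a ∈ Finset.Icc (1 : ℤ) ((n + 1 : ℕ) : ℤ) →
      b ∈ Finset.Icc (1 : ℤ) ((n + 1 : ℕ) : ℤ) → (σ' b < σ' a ↔ b < a) := by
    intro a b ha hb
    rw [Finset.mem_Icc] at ha hb
    constructor
    · intro h
      by_contra hc
      push_neg at hc
      rcases eq_or_lt_of_le hc with he | hl
      · rw [he] at h; exact lt_irrefl _ h
      · exact absurd (hinc a b ha.1 hl (by linarith)) (by linarith)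
    · intro h
      exact hinc b a hb.1 h (by linarith)
  have hinv : invStat (n + 1) (σ' * v) = invStat (n + 1) v := by
    unfold invStat
    congr 1
    apply Finset.filter_congr
    intro p hp
    rw [Finset.mem_product] at hp
    simp only [Equiv.Perm.mul_apply]
    exact and_congr_right fun _ => key (v p.1) (v p.2) (hvmem _ hp.1) (hvmem _ hp.2)
  have hdel : delB (n + 1) (σ' * v) = delB (n + 1) v := by
    unfold delB
    congr 1
    apply Finset.filter_congr
    intro j hj
    have hj' : j ∈ Finset.Icc (1 : ℤ) ((n + 1 : ℕ) : ℤ) := by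
      rw [Finset.mem_Icc] at hj ⊢
      exact ⟨by linarith [hj.1], hj.2⟩
    simp only [Equiv.Perm.mul_apply]
    constructor
    · intro h i hi hij
      exact (key (v i) (v j) (hvmem _ hi) (hvmem _ hj')).mp (h i hi hij)
    · intro h i hi hij
      exact (key (v i) (v j) (hvmem _ hi) (hvmem _ hj')).mpr (h i hi hij)
  have hneg : negSet (n + 1) (σ' * v)⁻¹ = negSet (n + 1) σ'⁻¹ := by
    unfold negSet
    apply Finset.filter_congr
    intro i _
    rw [mul_inv_rev]
    simp only [Equiv.Perm.mul_apply]
    exact hviff (σ'⁻¹ i)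
  have hinvσ' : invStat (n + 1) σ' = 0 := by
    unfold invStat
    rw [Finset.card_eq_zero, Finset.filter_eq_empty_iff]
    intro p hp h
    rw [Finset.mem_product] at hp
    obtain ⟨h1, h2⟩ := h
    have := (key p.2 p.1 hp.2 hp.1).mpr h1
    linarith
  have hdelσ' : delB (n + 1) σ' = 0 := by
    unfold delB
    rw [Finset.card_eq_zero, Finset.filter_eq_empty_iff]
    intro j hj h
    rw [Finset.mem_Icc] at hj
    have h1 : (1 : ℤ) ∈ Finset.Icc (1 : ℤ) ((n + 1 : ℕ) : ℤ) := by
      rw [Finset.mem_Icc]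
      exact ⟨le_refl 1, by linarith [hj.1, hj.2]⟩
    have h2 := h 1 h1 (by linarith [hj.1])
    have h3 := hinc 1 j le_rfl (by linarith [hj.1]) (by linarith [hj.2, hNcast])
    linarith
  have hnegv : negSum (n + 1) v⁻¹ = 0 := by
    have he : negSet (n + 1) v⁻¹ = ∅ := by
      unfold negSet
      rw [Finset.filter_eq_empty_iff]
      intro i hi
      rw [Finset.mem_Icc] at hi
      have := hvipos i (by linarith)
      simp only [not_lt]
      linarith
    unfold negSum
    rw [he, Finset.sum_empty]
  refine ⟨hinv, hdel, hneg, ?_⟩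
  have hnsum : negSum (n + 1) (σ' * v)⁻¹ = negSum (n + 1) σ'⁻¹ := by
    unfold negSum; rw [hneg]
  unfold ellL
  rw [hinv, hdel, hinvσ', hdelσ', hnsum, hnegv]
  push_cast
  ring
end SignedEven
end
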